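/- arXiv:2604.24228 — 8 statements merged into one kernel-verified Lean document; each statement's English description precedes it below -/
import Mathlib

section
/- Let H be a graph each of whose connected components is a subdivided star, that is, a tree with at most one vertex of degree at least 3. If a graph G contains H as an induced subgraph and G' is a graph obtained from G by subdividing one edge, then G' also contains H as an induced subgraph. (Consequently, an induced copy of such an H cannot be destroyed by any sequence of edge subdivisions.) -/
open SimpleGraph

/-- The number of neighbors (degree) of a vertex, via `Set.ncard`. -/
noncomputable def ndeg {V : Type*} (G : SimpleGraph V) (v : V) : ℕ := (G.neighborSet v).ncard

/-- The graph obtained from `G` by subdividing the edge `uv`: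
the edge `uv` is deleted, a new vertex (`none`) is added, and it is joined to `u` and `v`. -/
def subdivide {V : Type*} (G : SimpleGraph V) (u v : V) : SimpleGraph (Option V) :=
  SimpleGraph.fromRel (fun x y =>
    (∃ a b : V, x = some a ∧ y = some b ∧ G.Adj a b ∧ ¬(a = u ∧ b = v) ∧ ¬(a = v ∧ b = u)) ∨
    (x = none ∧ (y = some u ∨ y = some v)))

lemma subdivide_adj_some_some {V : Type*} (G : SimpleGraph V) (u v w z : V) :
    (subdivide G u v).Adj (some w) (some z) ↔
      G.Adj w z ∧ ¬(w = u ∧ z = v) ∧ ¬(w = v ∧ z = u) := by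
  rw [subdivide, fromRel_adj]
  constructor
  · rintro ⟨hne, (⟨a', b', ha, hb, h1, h2, h3⟩ | ⟨h, -⟩) | (⟨a', b', ha, hb, h1, h2, h3⟩ | ⟨h, -⟩)⟩
    · cases ha; cases hb; exact ⟨h1, h2, h3⟩
    · simp at h
    · cases ha; cases hb
      exact ⟨h1.symm, fun ⟨e1, e2⟩ => h3 ⟨e2, e1⟩, fun ⟨e1, e2⟩ => h2 ⟨e2, e1⟩⟩
    · simp at h
  · rintro ⟨h1, h2, h3⟩
    exact ⟨by simpa using h1.ne, Or.inl (Or.inl ⟨w, z, rfl, rfl, h1, h2, h3⟩)⟩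

lemma subdivide_adj_none_some {V : Type*} (G : SimpleGraph V) (u v w : V) :
    (subdivide G u v).Adj none (some w) ↔ w = u ∨ w = v := by
  rw [subdivide, fromRel_adj]
  constructor
  · rintro ⟨-, (⟨a', b', ha, -⟩ | ⟨-, h⟩) | (⟨a', b', -, hb, -⟩ | ⟨h, -⟩)⟩
    · simp at ha
    · rcases h with h | h <;> [left; right] <;> exact (Option.some.inj h)
    · simp at hb
    · simp at h
  · rintro (rfl | rfl)
    · exact ⟨by simp, Or.inl (Or.inr ⟨rfl, Or.inl rfl⟩)⟩
    · exact ⟨by simp, Or.inl (Or.inr ⟨rfl, Or.inr rfl⟩)⟩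

lemma subdivide_comm {V : Type*} (G : SimpleGraph V) (u v : V) :
    subdivide G u v = subdivide G v u := by
  ext x y
  rw [subdivide, subdivide, fromRel_adj, fromRel_adj]
  constructor <;>
  · rintro ⟨hne, h⟩
    refine ⟨hne, ?_⟩
    rcases h with (⟨a', b', ha, hb, h1, h2, h3⟩ | ⟨h, h'⟩) | (⟨a', b', ha, hb, h1, h2, h3⟩ | ⟨h, h'⟩)
    · exact Or.inl (Or.inl ⟨a', b', ha, hb, h1, h3, h2⟩)
    · exact Or.inl (Or.inr ⟨h, h'.symm⟩)
    · exact Or.inr (Or.inl ⟨a', b', ha, hb, h1, h3, h2⟩)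
    · exact Or.inr (Or.inr ⟨h, h'.symm⟩)

lemma subdiv_key {α V : Type*} [Fintype α] {H : SimpleGraph α} {G : SimpleGraph V}
    {u v : V} (f : H ↪g G) {a b : α} (hab : H.Adj a b)
    (hfa : f a = u) (hfb : f b = v)
    (hbridge : ¬(H.deleteEdges {s(a, b)}).Reachable a b)
    (hside : ∀ z, (H.deleteEdges {s(a, b)}).Reachable b z → ndeg H z ≤ 2) :
    Nonempty (H ↪g subdivide G u v) := by
  classical
  set K := H.deleteEdges {s(a, b)} with hKdef
  have hKadj : ∀ x y : α, K.Adj x y ↔ H.Adj x y ∧ ¬(x = a ∧ y = b) ∧ ¬(x = b ∧ y = a) := by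
    intro x y
    rw [hKdef, deleteEdges_adj]
    simp only [Set.mem_singleton_iff, Sym2.eq_iff]
    tauto
  set T : Set α := {z | K.Reachable b z} with hTdef
  have hbT : b ∈ T := Reachable.refl b
  have haT : a ∉ T := fun h => hbridge (Reachable.symm h)
  have hTadj : ∀ x y, x ∈ T → K.Adj x y → y ∈ T := fun x y hx hxy => hx.trans hxy.reachable
  have hHK : ∀ x y, x ∈ T → y ∈ T → (H.Adj x y ↔ K.Adj x y) := by
    intro x y hx hy
    have hxa : x ≠ a := fun h => haT (h ▸ hx)
    have hya : y ≠ a := fun h => haT (h ▸ hy)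
    rw [hKadj]
    tauto
  have hdeg : ∀ z ∈ T, (H.neighborSet z).ncard ≤ 2 := fun z hz => hside z hz
  -- b has at most one neighbor in K
  have hNbcard : (K.neighborSet b).ncard ≤ 1 := by
    have hsub : K.neighborSet b ⊆ H.neighborSet b \ {a} := by
      intro w hw
      have := (hKadj b w).1 hw
      exact ⟨this.1, fun h => this.2.2 ⟨rfl, h⟩⟩
    have h1 := Set.ncard_le_ncard hsub (Set.toFinite _)
    have h2 : (H.neighborSet b \ {a}).ncard + 1 = (H.neighborSet b).ncard :=
      Set.ncard_diff_singleton_add_one (hab.symm) (Set.toFinite _)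
    have h3 := hdeg b hbT
    omega
  have closer : ∀ x, x ∈ T → x ≠ b → ∃ y, y ∈ T ∧ K.Adj x y ∧ K.dist b y + 1 = K.dist b x := by
    intro x hx hxb
    obtain ⟨p, hp⟩ := (hx : K.Reachable b x).exists_walk_length_eq_dist
    obtain ⟨y, hxy, q, hq⟩ := Walk.exists_eq_cons_of_ne hxb p.reverse
    have hyT : y ∈ T := hx.trans hxy.reachable
    have hql : q.length + 1 = K.dist b x := by
      have h := congrArg Walk.length hq
      rw [Walk.length_reverse, Walk.length_cons, hp] at h
      omega
    have hdy : K.dist b y ≤ q.length := by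
      have h := dist_le q.reverse
      rwa [Walk.length_reverse] at h
    have hdx : K.dist b x ≤ K.dist b y + 1 := by
      obtain ⟨r, hr⟩ := (hyT : K.Reachable b y).exists_walk_length_eq_dist
      have h := dist_le (r.concat hxy.symm)
      rwa [Walk.length_concat, hr] at h
    exact ⟨y, hyT, hxy, by omega⟩
  have hd0 : ∀ x ∈ T, K.dist b x = 0 → x = b := by
    intro x hx h
    exact ((hx : K.Reachable b x).dist_eq_zero_iff.mp h).symm
  have dinj : ∀ n, ∀ x ∈ T, ∀ y ∈ T, K.dist b x = n → K.dist b y = n → x = y := by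
    intro n
    induction n with
    | zero => exact fun x hx y hy hdx hdy => (hd0 x hx hdx).trans (hd0 y hy hdy).symm
    | succ n ih =>
      intro x hx y hy hdx hdy
      by_contra hxy
      have hxb : x ≠ b := fun h => by subst h; rw [dist_self] at hdx; omega
      have hyb : y ≠ b := fun h => by subst h; rw [dist_self] at hdy; omega
      obtain ⟨px, hpxT, hpxadj, hpxd⟩ := closer x hx hxb
      obtain ⟨py, hpyT, hpyadj, hpyd⟩ := closer y hy hyb
      have hpeq : px = py := ih px hpxT py hpyT (by omega) (by omega)
      subst hpeq
      rcases Nat.eq_zero_or_pos n with hn | hn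
      · have hwb : px = b := hd0 px hpxT (by omega)
        subst hwb
        have h1 : x ∈ K.neighborSet px := hpxadj.symm
        have h2 : y ∈ K.neighborSet px := hpyadj.symm
        exact hxy ((Set.ncard_le_one (Set.toFinite _)).mp hNbcard x h1 y h2)
      · have hwb : px ≠ b := fun h => by
          subst h; rw [dist_self] at hpxd; omega
        obtain ⟨pw, hpwT, hpwadj, hpwd⟩ := closer px hpxT hwb
        have hxpw : x ≠ pw := fun h => by subst h; omega
        have hypw : y ≠ pw := fun h => by subst h; omega
        have hsub : ({x, y, pw} : Set α) ⊆ H.neighborSet px := by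
          rintro z (rfl | rfl | rfl)
          · exact ((hKadj px z).1 hpxadj.symm).1
          · exact ((hKadj px z).1 hpyadj.symm).1
          · exact ((hKadj px z).1 hpwadj).1
        have hc : ({x, y, pw} : Set α).ncard = 3 := by
          rw [Set.ncard_insert_of_notMem (by simp [hxy, hxpw]) (Set.toFinite _),
            Set.ncard_insert_of_notMem (by simp [hypw]) (Set.toFinite _),
            Set.ncard_singleton]
        have hle := Set.ncard_le_ncard hsub (Set.toFinite _)
        have := hdeg px hpxT
        omega
  choose pred hpT hpAdj hpd using closer
  have hfinj : Function.Injective f := f.injective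
  have hfu : ∀ z : α, f z = u ↔ z = a := by
    intro z
    constructor
    · intro h; exact hfinj (h.trans hfa.symm)
    · rintro rfl; exact hfa
  have hfv : ∀ z : α, f z = v ↔ z = b := by
    intro z
    constructor
    · intro h; exact hfinj (h.trans hfb.symm)
    · rintro rfl; exact hfb
  have hadjT : ∀ x (hx : x ∈ T) y (hy : y ∈ T), K.Adj x y →
      (∃ h : x ≠ b, pred x hx h = y) ∨ (∃ h : y ≠ b, pred y hy h = x) := by
    intro x hx y hy hxy
    have hne : x ≠ y := hxy.ne
    have hdne : K.dist b x ≠ K.dist b y := fun h => hne (dinj _ x hx y hy rfl h.symm)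
    have htri : ∀ p q : α, p ∈ T → K.Adj p q → K.dist b q ≤ K.dist b p + 1 := by
      intro p q hp hpq
      obtain ⟨r, hr⟩ := (hp : K.Reachable b p).exists_walk_length_eq_dist
      have h := dist_le (r.concat hpq)
      rwa [Walk.length_concat, hr] at h
    rcases lt_or_gt_of_ne hdne with h | h
    · right
      have hyb : y ≠ b := fun h' => by subst h'; rw [SimpleGraph.dist_self] at h; omega
      refine ⟨hyb, dinj (K.dist b x) _ (hpT y hy hyb) x hx ?_ rfl⟩
      have h1 := hpd y hy hyb
      have h2 := htri x y hx hxy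
      omega
    · left
      have hxb : x ≠ b := fun h' => by subst h'; rw [SimpleGraph.dist_self] at h; omega
      refine ⟨hxb, dinj (K.dist b y) _ (hpT x hx hxb) y hy ?_ rfl⟩
      have h1 := hpd x hx hxb
      have h2 := htri y x hy hxy.symm
      omega
  let g : α → Option V := fun x =>
    if hxb : x = b then none
    else if hx : x ∈ T then some (f (pred x hx hxb)) else some (f x)
  have hgb : g b = none := dif_pos rfl
  have hgT : ∀ x (hx : x ∈ T) (hxb : x ≠ b), g x = some (f (pred x hx hxb)) := by
    intro x hx hxb
    show (if hxb : x = b then none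
      else if hx : x ∈ T then some (f (pred x hx hxb)) else some (f x)) = _
    rw [dif_neg hxb, dif_pos hx]
  have hgO : ∀ x, x ∉ T → g x = some (f x) := by
    intro x hx
    have hxb : x ≠ b := fun h => hx (h ▸ hbT)
    show (if hxb : x = b then none
      else if hx : x ∈ T then some (f (pred x hx hxb)) else some (f x)) = _
    rw [dif_neg hxb, dif_neg hx]
  have hpa : ∀ x (hx : x ∈ T) (hxb : x ≠ b), pred x hx hxb ≠ a :=
    fun x hx hxb h => haT (h ▸ hpT x hx hxb)
  have hginj : Function.Injective g := by
    intro x y hxy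
    by_cases hxb : x = b <;> by_cases hyb : y = b
    · rw [hxb, hyb]
    · subst hxb
      rw [hgb] at hxy
      by_cases hy : y ∈ T
      · rw [hgT y hy hyb] at hxy; simp at hxy
      · rw [hgO y hy] at hxy; simp at hxy
    · subst hyb
      rw [hgb] at hxy
      by_cases hx : x ∈ T
      · rw [hgT x hx hxb] at hxy; simp at hxy
      · rw [hgO x hx] at hxy; simp at hxy
    · by_cases hx : x ∈ T <;> by_cases hy : y ∈ T
      · rw [hgT x hx hxb, hgT y hy hyb] at hxy
        have heq := hfinj (Option.some.inj hxy)
        have h1 := hpd x hx hxb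
        have h2 := hpd y hy hyb
        rw [heq] at h1
        exact dinj _ x hx y hy rfl (by omega)
      · rw [hgT x hx hxb, hgO y hy] at hxy
        have heq := hfinj (Option.some.inj hxy)
        exact absurd (heq ▸ hpT x hx hxb) hy
      · rw [hgO x hx, hgT y hy hyb] at hxy
        have heq := hfinj (Option.some.inj hxy)
        exact absurd (heq.symm ▸ hpT y hy hyb) hx
      · rw [hgO x hx, hgO y hy] at hxy
        exact hfinj (Option.some.inj hxy)
  have hBout : ∀ y, y ∉ T → (H.Adj b y ↔ y = a) := by
    intro y hy
    constructor
    · intro h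
      by_contra hya
      have hK : K.Adj b y := (hKadj b y).2
        ⟨h, fun h1 => hab.ne (h1.1.symm), fun h1 => hya h1.2⟩
      exact hy (hTadj b y hbT hK)
    · rintro rfl; exact hab.symm
  have hMixFalse : ∀ x y, x ∈ T → x ≠ b → y ∉ T → ¬H.Adj x y := by
    intro x y hx hxb hy h
    have hxa : x ≠ a := fun h' => haT (h' ▸ hx)
    exact hy (hTadj x y hx ((hKadj x y).2 ⟨h, fun h1 => hxa h1.1, fun h1 => hxb h1.1⟩))
  have hone : ∀ y, y ≠ b → ((subdivide G u v).Adj none (g y) ↔ H.Adj b y) := by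
    intro y hyb
    by_cases hy : y ∈ T
    · rw [hgT y hy hyb, subdivide_adj_none_some, hfu, hfv]
      constructor
      · rintro (h | h)
        · exact absurd h (hpa y hy hyb)
        · have hK := hpAdj y hy hyb
          rw [h] at hK
          exact (hHK b y hbT hy).2 hK.symm
      · intro h
        right
        have hK := (hHK b y hbT hy).1 h
        rcases hadjT b hbT y hy hK with ⟨h', _⟩ | ⟨h', hp⟩
        · exact absurd rfl h'
        · exact hp
    · rw [hgO y hy, subdivide_adj_none_some, hfu, hfv, hBout y hy]
      constructor
      · rintro (h | h)
        · exact h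
        · exact absurd h hyb
      · exact Or.inl
  have hmix : ∀ x (hx : x ∈ T) (hxb : x ≠ b) y, y ∉ T →
      ((subdivide G u v).Adj (g x) (g y) ↔ H.Adj x y) := by
    intro x hx hxb y hy
    rw [hgT x hx hxb, hgO y hy, subdivide_adj_some_some]
    constructor
    · rintro ⟨hG, -, h3⟩
      have hH : H.Adj (pred x hx hxb) y := f.map_adj_iff.mp hG
      exfalso
      by_cases hpb : pred x hx hxb = b
      · have hya : y = a := (hBout y hy).1 (hpb ▸ hH)
        exact h3 ⟨by rw [hpb, hfb], by rw [hya, hfa]⟩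
      · exact hMixFalse (pred x hx hxb) y (hpT x hx hxb) hpb hy hH
    · intro h
      exact absurd h (hMixFalse x y hx hxb hy)
  have houtout : ∀ x y, x ∉ T → y ∉ T →
      ((subdivide G u v).Adj (g x) (g y) ↔ H.Adj x y) := by
    intro x y hx hy
    have hxb : x ≠ b := fun h => hx (h ▸ hbT)
    have hyb : y ≠ b := fun h => hy (h ▸ hbT)
    rw [hgO x hx, hgO y hy, subdivide_adj_some_some, f.map_adj_iff]
    constructor
    · exact fun h => h.1
    · intro h
      exact ⟨h, fun h2 => hyb ((hfv y).1 h2.2), fun h2 => hxb ((hfv x).1 h2.1)⟩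
  have hTT : ∀ x (hx : x ∈ T) (hxb : x ≠ b) y (hy : y ∈ T) (hyb : y ≠ b),
      ((subdivide G u v).Adj (g x) (g y) ↔ H.Adj x y) := by
    intro x hx hxb y hy hyb
    rw [hgT x hx hxb, hgT y hy hyb, subdivide_adj_some_some]
    constructor
    · rintro ⟨hG, -, -⟩
      have hH : H.Adj (pred x hx hxb) (pred y hy hyb) := f.map_adj_iff.mp hG
      have hKp : K.Adj (pred x hx hxb) (pred y hy hyb) :=
        (hHK _ _ (hpT x hx hxb) (hpT y hy hyb)).1 hH
      have e1 := hpd x hx hxb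
      have e2 := hpd y hy hyb
      rcases hadjT _ (hpT x hx hxb) _ (hpT y hy hyb) hKp with ⟨h', hp⟩ | ⟨h', hp⟩
      · have e3 := hpd _ (hpT x hx hxb) h'
        rw [hp] at e3
        have hyx : y = pred x hx hxb := dinj _ y hy _ (hpT x hx hxb) rfl (by omega)
        rw [hyx]
        exact (hHK x _ hx (hpT x hx hxb)).2 (hpAdj x hx hxb)
      · have e3 := hpd _ (hpT y hy hyb) h'
        rw [hp] at e3
        have hxy : x = pred y hy hyb := dinj _ x hx _ (hpT y hy hyb) rfl (by omega)
        rw [hxy]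
        exact ((hHK y _ hy (hpT y hy hyb)).2 (hpAdj y hy hyb)).symm
    · intro hH
      have hK := (hHK x y hx hy).1 hH
      have hadjp : H.Adj (pred x hx hxb) (pred y hy hyb) := by
        rcases hadjT x hx y hy hK with ⟨h', hp⟩ | ⟨h', hp⟩
        · have hp' : pred x hx hxb = y := hp
          rw [hp']
          exact (hHK y _ hy (hpT y hy hyb)).2 (hpAdj y hy hyb)
        · have hp' : pred y hy hyb = x := hp
          rw [hp']
          exact ((hHK x _ hx (hpT x hx hxb)).2 (hpAdj x hx hxb)).symm
      refine ⟨f.map_adj_iff.2 hadjp, ?_, ?_⟩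
      · exact fun h2 => hpa x hx hxb ((hfu _).1 h2.1)
      · exact fun h2 => hpa y hy hyb ((hfu _).1 h2.2)
  have hmain : ∀ x y, (subdivide G u v).Adj (g x) (g y) ↔ H.Adj x y := by
    intro x y
    by_cases hxb : x = b
    · rw [hxb]
      by_cases hyb : y = b
      · rw [hyb, hgb]
        exact iff_of_false ((subdivide G u v).irrefl) (H.irrefl)
      · rw [hgb, hone y hyb]
    · by_cases hyb : y = b
      · rw [hyb, hgb, (subdivide G u v).adj_comm, H.adj_comm, hone x hxb]
      · by_cases hx : x ∈ T <;> by_cases hy : y ∈ T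
        · exact hTT x hx hxb y hy hyb
        · exact hmix x hx hxb y hy
        · rw [(subdivide G u v).adj_comm, H.adj_comm]
          exact hmix y hy hyb x hx
        · exact houtout x y hx hy
  exact ⟨⟨⟨g, hginj⟩, fun {x y} => hmain x y⟩⟩


/-- If every connected component of `H` is a subdivided star (i.e. `H` is a forest in which
every component has at most one vertex of degree at least 3), `G` contains `H` as an induced
subgraph, and `G'` is obtained from `G` by subdividing one edge, then `G'` also contains `H`
as an induced subgraph. -/
theorem subdividedStarForest_survives_subdivision
    {α V : Type*} [Fintype α] [Fintype V]
    (H : SimpleGraph α) (G : SimpleGraph V)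
    (hforest : H.IsAcyclic)
    (hstar : ∀ x y : α, 3 ≤ ndeg H x → 3 ≤ ndeg H y → H.Reachable x y → x = y)
    (u v : V) (huv : G.Adj u v)
    (hind : Nonempty (H ↪g G)) :
    Nonempty (H ↪g subdivide G u v) := by
  classical
  obtain ⟨f⟩ := hind
  by_cases hbad : ∃ a b : α, H.Adj a b ∧ f a = u ∧ f b = v
  · obtain ⟨a, b, hab, hfa, hfb⟩ := hbad
    have hbridge' : H.IsBridge s(a, b) :=
      (isAcyclic_iff_forall_edge_isBridge.mp hforest) (H.mem_edgeSet.mpr hab)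
    have hbridge : ¬(H.deleteEdges {s(a, b)}).Reachable a b := (isBridge_iff.mp hbridge')
    have hdisj : (∀ z, (H.deleteEdges {s(a, b)}).Reachable b z → ndeg H z ≤ 2) ∨
        (∀ z, (H.deleteEdges {s(b, a)}).Reachable a z → ndeg H z ≤ 2) := by
      by_contra hcon
      push_neg at hcon
      obtain ⟨⟨z1, hz1r, hz1⟩, ⟨z2, hz2r, hz2⟩⟩ := hcon
      rw [Sym2.eq_swap] at hz2r
      have hmono : H.deleteEdges {s(a, b)} ≤ H := deleteEdges_le _
      have hr : H.Reachable z1 z2 :=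
        ((hz1r.mono hmono).symm.trans hab.symm.reachable).trans (hz2r.mono hmono)
      have hz12 : z1 = z2 := hstar z1 z2 (by omega) (by omega) hr
      rw [← hz12] at hz2r
      exact hbridge (hz2r.trans hz1r.symm)
    rcases hdisj with h | h
    · exact subdiv_key f hab hfa hfb hbridge h
    · have hbridge2 : ¬(H.deleteEdges {s(b, a)}).Reachable b a := by
        rw [Sym2.eq_swap]
        exact fun hr => hbridge hr.symm
      rw [subdivide_comm]
      exact subdiv_key f hab.symm hfb hfa hbridge2 h
  · push_neg at hbad
    refine ⟨⟨⟨fun x => some (f x), fun x y h => f.injective (Option.some.inj h)⟩, ?_⟩⟩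
    intro x y
    show (subdivide G u v).Adj (some (f x)) (some (f y)) ↔ H.Adj x y
    rw [subdivide_adj_some_some, f.map_adj_iff]
    constructor
    · exact fun h => h.1
    · intro h
      refine ⟨h, ?_, ?_⟩
      · rintro ⟨h1, h2⟩; exact hbad x y h h1 h2
      · rintro ⟨h1, h2⟩; exact hbad y x h.symm h2 h1
end

section
/- Let H be a graph each of whose connected components is a subdivided star. Then for every graph G, the following are equivalent: (i) some graph obtained from G by a (possibly empty) finite sequence of edge subdivisions is H-free; (ii) G itself is H-free. -/
open SimpleGraph

/-- `G` is `H`-free if it contains no induced subgraph isomorphic to `H`. -/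
def HFree {α β : Type*} (H : SimpleGraph α) (G : SimpleGraph β) : Prop :=
  IsEmpty (H ↪g G)

/-- Bundled graphs. -/
abbrev GraphB : Type 1 := Σ V : Type, SimpleGraph V

/-- One edge-subdivision step between (bundled) graphs, up to isomorphism. -/
def SubdivStep : GraphB → GraphB → Prop := fun p q =>
  ∃ u v : p.1, p.2.Adj u v ∧ Nonempty (q.2 ≃g subdivide p.2 u v)

/-! ### Auxiliary lemmas -/

namespace SubdivAux

attribute [local instance] Classical.propDecidable

open Walk

lemma subdivide_adj_ss {V : Type*} (G : SimpleGraph V) (u v a b : V) :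
    (subdivide G u v).Adj (some a) (some b) ↔
      (G.Adj a b ∧ ¬(a = u ∧ b = v) ∧ ¬(a = v ∧ b = u)) := by
  rw [subdivide, fromRel_adj]
  constructor
  · rintro ⟨hne, (⟨a', b', ha, hb, h1, h2, h3⟩ | ⟨h, _⟩) |
      (⟨a', b', ha, hb, h1, h2, h3⟩ | ⟨_, hy⟩)⟩
    · cases ha; cases hb; exact ⟨h1, h2, h3⟩
    · exact absurd h (by simp)
    · cases ha; cases hb; exact ⟨h1.symm, by tauto, by tauto⟩
    · exact absurd hy (by rintro (h | h) <;> simp_all)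
  · rintro ⟨h1, h2, h3⟩
    exact ⟨by simpa using h1.ne, Or.inl (Or.inl ⟨a, b, rfl, rfl, h1, h2, h3⟩)⟩

lemma subdivide_adj_ns {V : Type*} (G : SimpleGraph V) (u v a : V) :
    (subdivide G u v).Adj none (some a) ↔ a = u ∨ a = v := by
  rw [subdivide, fromRel_adj]
  constructor
  · rintro ⟨hne, (⟨a', b', ha, _⟩ | ⟨_, hy⟩) | (⟨a', b', _, hb, _⟩ | ⟨h, _⟩)⟩
    · exact absurd ha (by simp)
    · rcases hy with h | h <;> injection h with e <;> [exact Or.inl e; exact Or.inr e]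
    · exact absurd hb (by simp)
    · exact absurd h (by simp)
  · intro h
    refine ⟨by simp, Or.inl (Or.inr ⟨rfl, ?_⟩)⟩
    rcases h with rfl | rfl <;> simp

lemma subdivide_comm {V : Type*} (G : SimpleGraph V) (u v : V) :
    subdivide G u v = subdivide G v u := by
  have key : ∀ (u v : V) (x y : Option V),
      (∃ a b : V, x = some a ∧ y = some b ∧ G.Adj a b ∧ ¬(a = u ∧ b = v) ∧ ¬(a = v ∧ b = u)) ∨
      (x = none ∧ (y = some u ∨ y = some v)) →
      (∃ a b : V, x = some a ∧ y = some b ∧ G.Adj a b ∧ ¬(a = v ∧ b = u) ∧ ¬(a = u ∧ b = v)) ∨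
      (x = none ∧ (y = some v ∨ y = some u)) := by
    rintro u v x y (⟨a, b, rfl, rfl, h1, h2, h3⟩ | ⟨rfl, h⟩)
    · exact Or.inl ⟨a, b, rfl, rfl, h1, h3, h2⟩
    · exact Or.inr ⟨rfl, h.symm⟩
  ext x y
  rw [subdivide, subdivide, fromRel_adj, fromRel_adj]
  constructor
  · rintro ⟨hne, h | h⟩
    · exact ⟨hne, Or.inl (key u v x y h)⟩
    · exact ⟨hne, Or.inr (key u v y x h)⟩
  · rintro ⟨hne, h | h⟩
    · exact ⟨hne, Or.inl (key v u x y h)⟩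
    · exact ⟨hne, Or.inr (key v u y x h)⟩

variable {α : Type} {H' : SimpleGraph α}

noncomputable def thePath {z b : α} (h : H'.Reachable z b) : H'.Walk z b :=
  (Nonempty.some h).toPath

lemma thePath_isPath {z b : α} (h : H'.Reachable z b) : (thePath h).IsPath :=
  (Nonempty.some h).toPath.2

lemma eq_thePath (hac : H'.IsAcyclic) {z b : α} (h : H'.Reachable z b)
    (q : H'.Walk z b) (hq : q.IsPath) : q = thePath h :=
  congrArg Subtype.val (hac.path_unique ⟨q, hq⟩ ⟨thePath h, thePath_isPath h⟩)

noncomputable def predf (H' : SimpleGraph α) (a0 b0 : α) (z : α) : α :=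
  if h : H'.Reachable z b0 ∧ z ≠ b0 then
    Classical.choose (Walk.exists_eq_cons_of_ne h.2 (thePath h.1))
  else a0

lemma predf_spec {a0 b0 z : α} (hz : H'.Reachable z b0) (hne : z ≠ b0) :
    ∃ (h : H'.Adj z (predf H' a0 b0 z)) (q : H'.Walk (predf H' a0 b0 z) b0),
      thePath hz = Walk.cons h q := by
  have hc := Classical.choose_spec (Walk.exists_eq_cons_of_ne hne (thePath hz))
  rw [predf, dif_pos (⟨hz, hne⟩ : H'.Reachable z b0 ∧ z ≠ b0)]
  exact hc

lemma predf_adj {a0 b0 z : α} (hz : H'.Reachable z b0) (hne : z ≠ b0) :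
    H'.Adj z (predf H' a0 b0 z) := by
  obtain ⟨h, q, hq⟩ := predf_spec (a0 := a0) hz hne; exact h

lemma predf_reach {a0 b0 z : α} (hz : H'.Reachable z b0) (hne : z ≠ b0) :
    H'.Reachable (predf H' a0 b0 z) b0 := by
  obtain ⟨h, q, hq⟩ := predf_spec (a0 := a0) hz hne; exact ⟨q⟩

noncomputable def dpt (H' : SimpleGraph α) (b0 z : α) : ℕ :=
  if h : H'.Reachable z b0 then (thePath h).length else 0

lemma dpt_eq {b0 z : α} (h : H'.Reachable z b0) : dpt H' b0 z = (thePath h).length :=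
  dif_pos h

lemma dpt_predf (hac : H'.IsAcyclic) {a0 b0 z : α} (hz : H'.Reachable z b0) (hne : z ≠ b0) :
    dpt H' b0 (predf H' a0 b0 z) + 1 = dpt H' b0 z := by
  obtain ⟨h, q, hq⟩ := predf_spec (a0 := a0) hz hne
  have hq' : q.IsPath := by
    have h2 := thePath_isPath hz
    rw [hq] at h2
    exact h2.of_cons
  rw [dpt_eq (⟨q⟩ : H'.Reachable _ b0), dpt_eq hz, hq,
    ← eq_thePath hac ⟨q⟩ q hq']
  simp

lemma predf_eq_getVert {a0 b0 z : α} (hz : H'.Reachable z b0) (hne : z ≠ b0) :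
    predf H' a0 b0 z = (thePath hz).getVert 1 := by
  obtain ⟨h, q, hq⟩ := predf_spec (a0 := a0) hz hne
  rw [hq]
  simp [Walk.getVert_cons_succ, Walk.getVert_zero]

lemma adj_char (hac : H'.IsAcyclic) {a0 b0 z w : α}
    (hz : H'.Reachable z b0) (hw : H'.Reachable w b0) (hadj : H'.Adj z w) :
    (z ≠ b0 ∧ predf H' a0 b0 z = w) ∨ (w ≠ b0 ∧ predf H' a0 b0 w = z) := by
  classical
  rcases eq_or_ne w b0 with rfl | hwb
  · have hne : z ≠ w := hadj.ne
    refine Or.inl ⟨hne, ?_⟩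
    rw [predf_eq_getVert hz hne,
      ← eq_thePath hac hz (Walk.cons hadj Walk.nil) (Path.singleton hadj).2]
    simp
  rcases eq_or_ne z b0 with rfl | hzb
  · refine Or.inr ⟨hwb, ?_⟩
    rw [predf_eq_getVert hw hwb,
      ← eq_thePath hac hw (Walk.cons hadj.symm Walk.nil) (Path.singleton hadj.symm).2]
    simp
  · by_cases hsup : z ∈ (thePath hw).support
    · refine Or.inr ⟨hwb, ?_⟩
      have htu : (thePath hw).takeUntil z hsup = Walk.cons hadj.symm Walk.nil :=
        congrArg Subtype.val (hac.path_unique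
          ⟨_, (thePath_isPath hw).takeUntil hsup⟩ (Path.singleton hadj.symm))
      have hspec := (thePath hw).take_spec hsup
      rw [predf_eq_getVert hw hwb, ← hspec, htu]
      simp [Walk.cons_append, Walk.nil_append, Walk.getVert_cons_succ, Walk.getVert_zero]
    · refine Or.inl ⟨hzb, ?_⟩
      rw [predf_eq_getVert hz hzb,
        ← eq_thePath hac hz (Walk.cons hadj (thePath hw)) ((thePath_isPath hw).cons hsup)]
      simp

/-- The key construction: if `f : H ↪g G` is an induced embedding, `a0 b0` an edge of `H`,
and every vertex on the `b0`-side of that edge has degree at most 2, then `H` also embeds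
into the subdivision of `G` at the edge `f a0, f b0`. -/
lemma emb_side {α V : Type} [Fintype α] (H : SimpleGraph α) (G : SimpleGraph V)
    (hforest : H.IsAcyclic) (f : H ↪g G) (a0 b0 : α) (hab : H.Adj a0 b0)
    (hdeg : ∀ z, (H.deleteEdges {s(a0, b0)}).Reachable z b0 → ndeg H z ≤ 2) :
    Nonempty (H ↪g subdivide G (f a0) (f b0)) := by
  classical
  set H' := H.deleteEdges {s(a0, b0)} with hH'def
  have hle : H' ≤ H := deleteEdges_le _
  have hac' : H'.IsAcyclic := by
    intro v c hc
    exact hforest (c.mapLe hle) (Walk.IsCycle.mapLe hle hc)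
  have hna0 : ¬ H'.Reachable a0 b0 := by
    have hb := isAcyclic_iff_forall_adj_isBridge.mp hforest hab
    exact (isBridge_iff.mp hb)
  have hSne : ∀ z, H'.Reachable z b0 → z ≠ a0 := fun z hz he => hna0 (he ▸ hz)
  have hb0S : H'.Reachable b0 b0 := Reachable.refl _
  have hadj_in : ∀ z w, H'.Reachable z b0 → H'.Reachable w b0 → (H.Adj z w ↔ H'.Adj z w) := by
    intro z w hz hw
    constructor
    · intro h
      rw [hH'def, deleteEdges_adj]
      refine ⟨h, ?_⟩
      simp only [Set.mem_singleton_iff, Sym2.eq_iff]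
      rintro (⟨rfl, rfl⟩ | ⟨rfl, rfl⟩)
      · exact hSne _ hz rfl
      · exact hSne _ hw rfl
    · exact fun h => hle h
  have hcross : ∀ z w, H'.Reachable z b0 → ¬ H'.Reachable w b0 →
      (H.Adj z w ↔ z = b0 ∧ w = a0) := by
    intro z w hz hw
    constructor
    · intro hzw
      by_cases he : s(z, w) = s(a0, b0)
      · rcases Sym2.eq_iff.mp he with ⟨rfl, rfl⟩ | ⟨rfl, rfl⟩
        · exact absurd hz hna0
        · exact ⟨rfl, rfl⟩
      · have h' : H'.Adj z w := by rw [hH'def, deleteEdges_adj]; exact ⟨hzw, by simpa using he⟩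
        exact absurd ((h'.symm.reachable).trans hz) hw
    · rintro ⟨rfl, rfl⟩; exact hab.symm
  have hinj : ∀ z w, H'.Reachable z b0 → H'.Reachable w b0 → z ≠ b0 → w ≠ b0 →
      predf H' a0 b0 z = predf H' a0 b0 w → z = w := by
    intro z w hz hw hzb hwb hpp
    by_contra hne
    obtain ⟨p, hpdef⟩ : ∃ p, predf H' a0 b0 z = p := ⟨_, rfl⟩
    rw [hpdef] at hpp
    have hpz : H'.Adj z p := by rw [← hpdef]; exact predf_adj hz hzb
    have hpw : H'.Adj w p := by rw [hpp]; exact predf_adj hw hwb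
    have hpS : H'.Reachable p b0 := by rw [← hpdef]; exact predf_reach hz hzb
    have hdz : dpt H' b0 p + 1 = dpt H' b0 z := by rw [← hpdef]; exact dpt_predf hac' hz hzb
    have hdw : dpt H' b0 p + 1 = dpt H' b0 w := by rw [hpp]; exact dpt_predf hac' hw hwb
    obtain ⟨r, hr, hrz, hrw⟩ : ∃ r, H.Adj p r ∧ r ≠ z ∧ r ≠ w := by
      rcases eq_or_ne p b0 with rfl | hpb
      · exact ⟨a0, hab.symm, fun h => hSne z hz h.symm, fun h => hSne w hw h.symm⟩
      · refine ⟨predf H' a0 b0 p, hle (predf_adj hpS hpb), ?_, ?_⟩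
        · intro h
          have hd := dpt_predf (a0 := a0) hac' hpS hpb
          rw [h] at hd
          omega
        · intro h
          have hd := dpt_predf (a0 := a0) hac' hpS hpb
          rw [h] at hd
          omega
    have hsub : ({z, w, r} : Set α) ⊆ H.neighborSet p := by
      intro x hx
      simp only [Set.mem_insert_iff, Set.mem_singleton_iff] at hx
      rcases hx with rfl | rfl | rfl
      · exact (hle hpz).symm
      · exact (hle hpw).symm
      · exact hr
    have hcard : ({z, w, r} : Set α).ncard = 3 := by
      rw [Set.ncard_eq_three]
      exact ⟨z, w, r, hne, fun h => hrz h.symm, fun h => hrw h.symm, rfl⟩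
    have h3 : 3 ≤ ndeg H p := by
      rw [ndeg, ← hcard]
      exact Set.ncard_le_ncard hsub (Set.toFinite _)
    have h2 := hdeg p hpS
    omega
  let g : α → Option V := fun z =>
    if h : H'.Reachable z b0 then (if z = b0 then none else some (f (predf H' a0 b0 z)))
    else some (f z)
  have hg1 : ∀ z, ¬ H'.Reachable z b0 → g z = some (f z) := fun z h => dif_neg h
  have hg2 : g b0 = none := (dif_pos hb0S).trans (if_pos rfl)
  have hg3 : ∀ z, H'.Reachable z b0 → z ≠ b0 → g z = some (f (predf H' a0 b0 z)) :=
    fun z h hne => (dif_pos h).trans (if_neg hne)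
  have hginj : Function.Injective g := by
    intro x y hxy
    by_cases hx : H'.Reachable x b0 <;> by_cases hy : H'.Reachable y b0
    · by_cases hxb : x = b0 <;> by_cases hyb : y = b0
      · exact hxb.trans hyb.symm
      · rw [hxb, hg2, hg3 y hy hyb] at hxy; simp at hxy
      · rw [hyb, hg2, hg3 x hx hxb] at hxy; simp at hxy
      · rw [hg3 x hx hxb, hg3 y hy hyb] at hxy
        exact hinj x y hx hy hxb hyb (f.injective (Option.some.inj hxy))
    · rw [hg1 y hy] at hxy
      by_cases hxb : x = b0
      · rw [hxb, hg2] at hxy; simp at hxy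
      · rw [hg3 x hx hxb] at hxy
        exact absurd (f.injective (Option.some.inj hxy) ▸ predf_reach hx hxb) hy
    · rw [hg1 x hx] at hxy
      by_cases hyb : y = b0
      · rw [hyb, hg2] at hxy; simp at hxy
      · rw [hg3 y hy hyb] at hxy
        exact absurd ((f.injective (Option.some.inj hxy)).symm ▸ predf_reach hy hyb) hx
    · rw [hg1 x hx, hg1 y hy] at hxy
      exact f.injective (Option.some.inj hxy)
  have hOO : ∀ x y, ¬ H'.Reachable x b0 → ¬ H'.Reachable y b0 →
      ((subdivide G (f a0) (f b0)).Adj (g x) (g y) ↔ H.Adj x y) := by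
    intro x y hx hy
    rw [hg1 x hx, hg1 y hy, subdivide_adj_ss]
    constructor
    · rintro ⟨h, -, -⟩; exact f.map_rel_iff.mp h
    · intro h
      refine ⟨f.map_rel_iff.mpr h, ?_, ?_⟩
      · rintro ⟨-, h2⟩; exact hy (by rw [f.injective h2])
      · rintro ⟨h1, -⟩; exact hx (by rw [f.injective h1])
  have hOB : ∀ x, ¬ H'.Reachable x b0 →
      ((subdivide G (f a0) (f b0)).Adj (g x) (g b0) ↔ H.Adj x b0) := by
    intro x hx
    rw [hg1 x hx, hg2, adj_comm, subdivide_adj_ns]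
    constructor
    · rintro (h | h)
      · rw [f.injective h]; exact hab
      · exact absurd (show H'.Reachable x b0 by rw [f.injective h]) hx
    · intro h
      have h2 := (hcross b0 x hb0S hx).mp h.symm
      exact Or.inl (by rw [h2.2])
  have hBI : ∀ y, H'.Reachable y b0 → ∀ hyb : y ≠ b0,
      ((subdivide G (f a0) (f b0)).Adj (g b0) (g y) ↔ H.Adj b0 y) := by
    intro y hy hyb
    rw [hg2, hg3 y hy hyb, subdivide_adj_ns]
    have hpy := predf_reach (a0 := a0) hy hyb
    constructor
    · rintro (h | h)
      · exact absurd (f.injective h) (hSne _ hpy)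
      · have hadj := predf_adj (a0 := a0) hy hyb
        rw [f.injective h] at hadj
        exact hle hadj.symm
    · intro h
      have h' := (hadj_in b0 y hb0S hy).mp h
      rcases adj_char (a0 := a0) hac' hb0S hy h' with ⟨hbb, -⟩ | ⟨-, he⟩
      · exact absurd rfl hbb
      · exact Or.inr (by rw [he])
  have hOI : ∀ x y, ¬ H'.Reachable x b0 → ∀ hy : H'.Reachable y b0, ∀ hyb : y ≠ b0,
      ((subdivide G (f a0) (f b0)).Adj (g x) (g y) ↔ H.Adj x y) := by
    intro x y hx hy hyb
    rw [hg1 x hx, hg3 y hy hyb, subdivide_adj_ss]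
    have hpy := predf_reach (a0 := a0) hy hyb
    constructor
    · rintro ⟨h, h1, -⟩
      have h2 := (hcross _ x hpy hx).mp (f.map_rel_iff.mp h).symm
      exact absurd ⟨by rw [h2.2], by rw [h2.1]⟩ h1
    · intro h
      exact absurd ((hcross y x hy hx).mp h.symm).1 hyb
  have hII : ∀ x y, ∀ hx : H'.Reachable x b0, ∀ hxb : x ≠ b0,
      ∀ hy : H'.Reachable y b0, ∀ hyb : y ≠ b0,
      ((subdivide G (f a0) (f b0)).Adj (g x) (g y) ↔ H.Adj x y) := by
    intro x y hx hxb hy hyb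
    rw [hg3 x hx hxb, hg3 y hy hyb, subdivide_adj_ss]
    have hpx := predf_reach (a0 := a0) hx hxb
    have hpy := predf_reach (a0 := a0) hy hyb
    constructor
    · rintro ⟨h, -, -⟩
      have h' := (hadj_in _ _ hpx hpy).mp (f.map_rel_iff.mp h)
      rcases adj_char (a0 := a0) hac' hpx hpy h' with ⟨hpb, he⟩ | ⟨hpb, he⟩
      · have hxy := hinj _ _ hpx hy hpb hyb he
        rw [← hxy]
        exact hle (predf_adj hx hxb)
      · have hxy := hinj _ _ hpy hx hpb hxb he
        exact (hle (by rw [← hxy]; exact predf_adj hy hyb)).symm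
    · intro h
      have h' := (hadj_in x y hx hy).mp h
      rcases adj_char (a0 := a0) hac' hx hy h' with ⟨-, he⟩ | ⟨-, he⟩
      · refine ⟨f.map_rel_iff.mpr ?_, ?_, ?_⟩
        · rw [he]; exact hle (predf_adj hy hyb)
        · rintro ⟨h1, -⟩; exact hSne _ hpx (f.injective h1)
        · rintro ⟨-, h2⟩; exact hSne _ hpy (f.injective h2)
      · refine ⟨f.map_rel_iff.mpr ?_, ?_, ?_⟩
        · rw [he]; exact (hle (predf_adj hx hxb)).symm
        · rintro ⟨h1, -⟩; exact hSne _ hpx (f.injective h1)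
        · rintro ⟨-, h2⟩; exact hSne _ hpy (f.injective h2)
  refine ⟨⟨⟨g, hginj⟩, ?_⟩⟩
  intro x y
  show (subdivide G (f a0) (f b0)).Adj (g x) (g y) ↔ H.Adj x y
  by_cases hx : H'.Reachable x b0 <;> by_cases hy : H'.Reachable y b0
  · by_cases hxb : x = b0 <;> by_cases hyb : y = b0
    · rw [hxb, hyb, hg2]
      constructor
      · intro h; exact absurd rfl h.ne
      · intro h; exact absurd rfl h.ne
    · rw [hxb]; exact hBI y hy hyb
    · rw [hyb]; exact (adj_comm _ _ _).trans ((hBI x hx hxb).trans (adj_comm _ _ _))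
    · exact hII x y hx hxb hy hyb
  · by_cases hxb : x = b0
    · rw [hxb]; exact (adj_comm _ _ _).trans ((hOB y hy).trans (adj_comm _ _ _))
    · exact (adj_comm _ _ _).trans ((hOI y x hy hx hxb).trans (adj_comm _ _ _))
  · by_cases hyb : y = b0
    · rw [hyb]; exact hOB x hx
    · exact hOI x y hx hy hyb
  · exact hOO x y hx hy

/-- If `H` is a subdivided-star forest which embeds (as induced subgraph) in `G`, then it
also embeds in any single subdivision of `G`. -/
lemma emb_subdivide {α V : Type} [Fintype α] (H : SimpleGraph α) (G : SimpleGraph V)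
    (hforest : H.IsAcyclic)
    (hstar : ∀ x y : α, 3 ≤ ndeg H x → 3 ≤ ndeg H y → H.Reachable x y → x = y)
    (f : H ↪g G) (u v : V) (huv : G.Adj u v) :
    Nonempty (H ↪g subdivide G u v) := by
  classical
  by_cases hex : ∃ a b : α, f a = u ∧ f b = v
  · obtain ⟨a0, b0, ha, hb⟩ := hex
    have hab : H.Adj a0 b0 := f.map_rel_iff.mp (by rw [ha, hb]; exact huv)
    have hswap : ({s(b0, a0)} : Set (Sym2 α)) = {s(a0, b0)} := by rw [Sym2.eq_swap]
    have hside : (∀ z, (H.deleteEdges {s(a0, b0)}).Reachable z b0 → ndeg H z ≤ 2) ∨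
        (∀ z, (H.deleteEdges {s(b0, a0)}).Reachable z a0 → ndeg H z ≤ 2) := by
      by_contra hcon
      push_neg at hcon
      obtain ⟨⟨z, hz, hz3⟩, ⟨w, hw, hw3⟩⟩ := hcon
      rw [hswap] at hw
      have hle : H.deleteEdges {s(a0, b0)} ≤ H := deleteEdges_le _
      have hzw : H.Reachable z w :=
        (hz.mono hle).trans (hab.symm.reachable.trans (hw.mono hle).symm)
      have heq := hstar z w (by omega) (by omega) hzw
      have hreach : (H.deleteEdges {s(a0, b0)}).Reachable a0 b0 := by
        refine Reachable.trans ?_ hz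
        refine Reachable.symm ?_
        rw [heq]
        exact hw
      have hbr := isAcyclic_iff_forall_adj_isBridge.mp hforest hab
      exact (isBridge_iff.mp hbr) hreach
    rcases hside with h | h
    · rw [← ha, ← hb]; exact emb_side H G hforest f a0 b0 hab h
    · rw [← ha, ← hb, subdivide_comm]
      exact emb_side H G hforest f b0 a0 hab.symm h
  · refine ⟨⟨⟨fun z => some (f z), fun x y h => f.injective (Option.some.inj h)⟩, ?_⟩⟩
    intro a b
    show (subdivide G u v).Adj (some (f a)) (some (f b)) ↔ H.Adj a b
    rw [subdivide_adj_ss]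
    constructor
    · rintro ⟨h, -, -⟩; exact f.map_rel_iff.mp h
    · intro h
      refine ⟨f.map_rel_iff.mpr h, ?_, ?_⟩
      · rintro ⟨h1, h2⟩; exact hex ⟨a, b, h1, h2⟩
      · rintro ⟨h1, h2⟩; exact hex ⟨b, a, h2, h1⟩

end SubdivAux

/-- Let `H` be a graph each of whose connected components is a subdivided star
(i.e. `H` is a forest and in each component there is at most one vertex of degree at
least 3).  Then some graph obtained from `G` by a (possibly empty) finite sequence of
edge subdivisions is `H`-free if and only if `G` itself is `H`-free. -/
theorem subdividedStarForest_free_iff_subdivision_free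
    {α V : Type} [Fintype α] [Fintype V]
    (H : SimpleGraph α) (G : SimpleGraph V)
    (hforest : H.IsAcyclic)
    (hstar : ∀ x y : α, 3 ≤ ndeg H x → 3 ≤ ndeg H y → H.Reachable x y → x = y) :
    (∃ q : GraphB, Relation.ReflTransGen SubdivStep ⟨V, G⟩ q ∧ HFree H q.2) ↔ HFree H G := by
  constructor
  · rintro ⟨q, hrel, hfree⟩
    by_contra hG
    refine absurd hfree ?_
    clear hfree
    induction hrel with
    | refl => exact hG
    | @tail b c hab hstep ih =>
      obtain ⟨u, v, huv, ⟨e⟩⟩ := hstep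
      intro hfe
      obtain ⟨emb⟩ : Nonempty (H ↪g b.2) := not_isEmpty_iff.mp ih
      obtain ⟨emb2⟩ := SubdivAux.emb_subdivide H b.2 hforest hstar emb u v huv
      exact (show IsEmpty (H ↪g c.2) from hfe).false (emb2.trans e.symm.toEmbedding)
  · intro h
    exact ⟨⟨V, G⟩, Relation.ReflTransGen.refl, h⟩
end

section
/- Let H be a graph with minimum degree at least 2 such that for every vertex x of degree exactly 2 in H, the two neighbors of x are adjacent in H (the neighborhood of every degree-2 vertex induces a K₂). Let G be a graph and F ⊆ E(G) a set of edges such that G − F is H-free. Let G' be the graph obtained from G by subdividing each edge of F exactly once. Then G' is H-free. -/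
open SimpleGraph

/-- The graph obtained from `G` by subdividing each edge in the set `F` exactly once:
for each `e ∈ F` a fresh vertex is added, joined to the two endpoints of `e`, and the
edges of `F` themselves are removed. -/
def subdivideSet {V : Type*} (G : SimpleGraph V) (F : Set (Sym2 V)) :
    SimpleGraph (V ⊕ ↥F) :=
  SimpleGraph.fromRel (fun x y =>
    (∃ a b : V, x = Sum.inl a ∧ y = Sum.inl b ∧ G.Adj a b ∧ s(a, b) ∉ F) ∨
    (∃ (e : ↥F) (a : V), x = Sum.inr e ∧ y = Sum.inl a ∧ a ∈ (e : Sym2 V)))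

lemma subdiv_adj_inl_inl {V : Type*} (G : SimpleGraph V) (F : Set (Sym2 V)) (a b : V) :
    (subdivideSet G F).Adj (Sum.inl a) (Sum.inl b) ↔ G.Adj a b ∧ s(a, b) ∉ F := by
  simp only [subdivideSet, fromRel_adj]
  constructor
  · rintro ⟨hne, (⟨a', b', ha, hb, hadj, hmem⟩ | ⟨e, c, he, _⟩) |
      (⟨a', b', ha, hb, hadj, hmem⟩ | ⟨e, c, he, _⟩)⟩
    · obtain rfl := Sum.inl_injective ha; obtain rfl := Sum.inl_injective hb
      exact ⟨hadj, hmem⟩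
    · exact absurd he (by simp)
    · obtain rfl := Sum.inl_injective ha; obtain rfl := Sum.inl_injective hb
      exact ⟨hadj.symm, by rwa [Sym2.eq_swap]⟩
    · exact absurd he (by simp)
  · rintro ⟨hadj, hmem⟩
    exact ⟨by simpa using hadj.ne, Or.inl (Or.inl ⟨a, b, rfl, rfl, hadj, hmem⟩)⟩

lemma subdiv_adj_inr_inl {V : Type*} (G : SimpleGraph V) (F : Set (Sym2 V)) (e : ↥F) (a : V) :
    (subdivideSet G F).Adj (Sum.inr e) (Sum.inl a) ↔ a ∈ (e : Sym2 V) := by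
  simp only [subdivideSet, fromRel_adj]
  constructor
  · rintro ⟨hne, (⟨a', b', ha, _⟩ | ⟨e', c, he, hc, hmem⟩) |
      (⟨a', b', _, hb, _⟩ | ⟨e', c, he, _⟩)⟩
    · exact absurd ha (by simp)
    · obtain rfl := Sum.inr_injective he; obtain rfl := Sum.inl_injective hc
      exact hmem
    · exact absurd hb (by simp)
    · exact absurd he (by simp)
  · intro h
    exact ⟨by simp, Or.inl (Or.inr ⟨e, a, rfl, rfl, h⟩)⟩

lemma subdiv_not_adj_inr_inr {V : Type*} (G : SimpleGraph V) (F : Set (Sym2 V)) (e f : ↥F) :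
    ¬ (subdivideSet G F).Adj (Sum.inr e) (Sum.inr f) := by
  simp only [subdivideSet, fromRel_adj]
  rintro ⟨hne, (⟨a', b', ha, _⟩ | ⟨e', c, _, hc, _⟩) |
      (⟨a', b', ha, _⟩ | ⟨e', c, _, hc, _⟩)⟩
  · exact absurd ha (by simp)
  · exact absurd hc (by simp)
  · exact absurd ha (by simp)
  · exact absurd hc (by simp)

/-- Let `H` be a graph with minimum degree at least 2 in which the two neighbors of every
degree-2 vertex are adjacent (the neighborhood of every degree-2 vertex induces a `K₂`).
If `F` is a set of edges of `G` such that `G − F` is `H`-free, then the graph obtained from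
`G` by subdividing each edge of `F` exactly once is `H`-free. -/
theorem subdivide_deletion_set_HFree
    {α V : Type*} [Fintype α] [Fintype V]
    (H : SimpleGraph α)
    (hmin : ∀ x : α, 2 ≤ ndeg H x)
    (hK2 : ∀ x y z : α, ndeg H x = 2 → H.Adj x y → H.Adj x z → y ≠ z → H.Adj y z)
    (G : SimpleGraph V) (F : Set (Sym2 V)) (hF : F ⊆ G.edgeSet)
    (hfree : HFree H (G.deleteEdges F)) :
    HFree H (subdivideSet G F) := by
  constructor
  intro φ
  -- Step 1: every vertex of `H` maps to an original vertex (a `Sum.inl`).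
  have hinl : ∀ x : α, ∃ a : V, φ x = Sum.inl a := by
    intro x
    cases hφ : φ x with
    | inl a => exact ⟨a, rfl⟩
    | inr e =>
      exfalso
      have hab : ∃ a b : V, (e : Sym2 V) = s(a, b) := by
        induction (e : Sym2 V) using Sym2.ind with
        | _ a b => exact ⟨a, b, rfl⟩
      obtain ⟨a, b, hab⟩ := hab
      have heG : (e : Sym2 V) ∈ G.edgeSet := hF e.2
      have hadj : G.Adj a b := by rwa [hab, mem_edgeSet] at heG
      -- neighbors of the subdivision vertex are contained in the two endpoints
      have hN : (subdivideSet G F).neighborSet (Sum.inr e) ⊆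
          ({Sum.inl a, Sum.inl b} : Set (V ⊕ ↥F)) := by
        rintro (c | f) hc
        · have : c ∈ (e : Sym2 V) := (subdiv_adj_inr_inl G F e c).1 hc
          rw [hab, Sym2.mem_iff] at this
          rcases this with rfl | rfl
          · exact Or.inl rfl
          · exact Or.inr rfl
        · exact absurd hc (subdiv_not_adj_inr_inr G F e f)
      have himg : φ '' (H.neighborSet x) ⊆ ({Sum.inl a, Sum.inl b} : Set (V ⊕ ↥F)) := by
        rintro _ ⟨y, hy, rfl⟩
        apply hN
        have : (subdivideSet G F).Adj (φ x) (φ y) := φ.map_rel_iff.2 hy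
        rwa [hφ] at this
      have hle : ndeg H x ≤ 2 := by
        have h1 : (φ '' (H.neighborSet x)).ncard = ndeg H x :=
          Set.ncard_image_of_injective _ φ.injective
        have h2 : (φ '' (H.neighborSet x)).ncard ≤
            ({Sum.inl a, Sum.inl b} : Set (V ⊕ ↥F)).ncard :=
          Set.ncard_le_ncard himg ((Set.finite_singleton _).insert _)
        have h3 : ({Sum.inl a, Sum.inl b} : Set (V ⊕ ↥F)).ncard ≤ 2 := by
          calc ({Sum.inl a, Sum.inl b} : Set (V ⊕ ↥F)).ncard
              ≤ ({Sum.inl b} : Set (V ⊕ ↥F)).ncard + 1 := Set.ncard_insert_le _ _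
            _ ≤ 2 := by simp [Set.ncard_singleton]
        omega
      have hdeg : ndeg H x = 2 := le_antisymm hle (hmin x)
      obtain ⟨y, z, hyz, hset⟩ := Set.ncard_eq_two.1 hdeg
      have hy : y ∈ H.neighborSet x := by rw [hset]; exact Or.inl rfl
      have hz : z ∈ H.neighborSet x := by rw [hset]; exact Or.inr rfl
      have hadjyz : H.Adj y z := hK2 x y z hdeg hy hz hyz
      have hG'yz : (subdivideSet G F).Adj (φ y) (φ z) := φ.map_rel_iff.2 hadjyz
      have hφy : φ y ∈ ({Sum.inl a, Sum.inl b} : Set (V ⊕ ↥F)) := himg ⟨y, hy, rfl⟩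
      have hφz : φ z ∈ ({Sum.inl a, Sum.inl b} : Set (V ⊕ ↥F)) := himg ⟨z, hz, rfl⟩
      have hne : φ y ≠ φ z := fun h => hyz (φ.injective h)
      have habF : s(a, b) ∈ F := by rw [← hab]; exact e.2
      have hgoal : ¬ (subdivideSet G F).Adj (Sum.inl a) (Sum.inl b) := by
        rw [subdiv_adj_inl_inl]
        rintro ⟨_, hmem⟩
        exact hmem habF
      rcases hφy with hy' | hy' <;> rcases hφz with hz' | hz'
      · exact hne (hy'.trans hz'.symm)
      · rw [hy', hz'] at hG'yz; exact hgoal hG'yz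
      · rw [hy', hz'] at hG'yz; exact hgoal hG'yz.symm
      · exact hne (hy'.trans hz'.symm)
  -- Step 2: build an embedding into `G.deleteEdges F`.
  choose f hf using hinl
  refine hfree.elim ⟨⟨f, fun x y h => φ.injective ?_⟩, ?_⟩
  · rw [hf x, hf y, h]
  · intro x y
    have := φ.map_rel_iff (a := x) (b := y)
    rw [hf x, hf y, subdiv_adj_inl_inl] at this
    rw [deleteEdges_adj]
    exact this
end

section
/- Let H be a graph with minimum degree at least 2 such that for every vertex x of degree exactly 2 in H, the two neighbors of x are adjacent in H. Then for every graph G and every integer k ≥ 0, the following are equivalent: (i) there exists F ⊆ E(G) with |F| ≤ k such that G − F is H-free; (ii) there exists a graph obtained from G by at most k edge subdivisions that is H-free. -/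
open SimpleGraph

/-- `SubdivSteps n p q`: `q` is obtained from `p` by exactly `n` edge subdivisions. -/
def SubdivSteps : ℕ → GraphB → GraphB → Prop
  | 0 => fun p q => p = q
  | n + 1 => fun p r => ∃ q : GraphB, SubdivStep p q ∧ SubdivSteps n q r

lemma subdiv_some_some {V : Type*} (G : SimpleGraph V) (u v a b : V) :
    (subdivide G u v).Adj (some a) (some b) ↔
      G.Adj a b ∧ ¬(a = u ∧ b = v) ∧ ¬(a = v ∧ b = u) := by
  rw [subdivide, fromRel_adj]
  constructor
  · rintro ⟨hne, (⟨a',b',ha,hb,h1,h2,h3⟩|⟨h,-⟩)|(⟨a',b',ha,hb,h1,h2,h3⟩|⟨h,-⟩)⟩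
    · injection ha with ha; injection hb with hb; subst ha; subst hb; exact ⟨h1, h2, h3⟩
    · simp at h
    · injection ha with ha; injection hb with hb; subst ha; subst hb
      exact ⟨h1.symm, fun ⟨x,y⟩ => h3 ⟨y,x⟩, fun ⟨x,y⟩ => h2 ⟨y,x⟩⟩
    · simp at h
  · rintro ⟨h, h1, h2⟩
    exact ⟨by simpa using h.ne, Or.inl (Or.inl ⟨a, b, rfl, rfl, h, h1, h2⟩)⟩

lemma subdiv_none_some {V : Type*} (G : SimpleGraph V) (u v a : V) :
    (subdivide G u v).Adj none (some a) ↔ a = u ∨ a = v := by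
  rw [subdivide, fromRel_adj]
  constructor
  · rintro ⟨-, (⟨a',b',ha,-⟩|⟨-,h⟩)|(⟨a',b',-,hb,-⟩|⟨h,-⟩)⟩
    · simp at ha
    · simpa using h
    · simp at hb
    · simp at h
  · rintro (rfl | rfl)
    · exact ⟨by simp, Or.inl (Or.inr ⟨rfl, Or.inl rfl⟩)⟩
    · exact ⟨by simp, Or.inl (Or.inr ⟨rfl, Or.inr rfl⟩)⟩

lemma subdiv_not_adj_uv {V : Type*} (G : SimpleGraph V) (u v : V) :
    ¬ (subdivide G u v).Adj (some u) (some v) := by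
  rw [subdiv_some_some]; tauto

lemma subdiv_some_none {V : Type*} (G : SimpleGraph V) (u v a : V) :
    (subdivide G u v).Adj (some a) none ↔ a = u ∨ a = v := by
  rw [adj_comm, subdiv_none_some]

lemma mem_image_some {V : Type*} {S : Set (Sym2 V)} {a b : V} :
    s(Option.some a, Option.some b) ∈ Sym2.map Option.some '' S ↔ s(a, b) ∈ S := by
  constructor
  · rintro ⟨e, he, heq⟩
    have : e = s(a, b) := Sym2.map.injective (Option.some_injective V) (by simpa using heq)
    rwa [this] at he
  · intro h; exact ⟨s(a, b), h, by simp⟩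

lemma none_not_mem_image {V : Type*} {S : Set (Sym2 V)} {x : Option V} :
    s(none, x) ∉ Sym2.map Option.some '' S := by
  rintro ⟨e, he, heq⟩
  induction e using Sym2.ind with
  | _ c d => simp [Sym2.eq_iff] at heq

lemma deleteEdges_subdivide {V : Type*} (G : SimpleGraph V) (u v : V) (S : Set (Sym2 V)) :
    (subdivide G u v).deleteEdges (Sym2.map Option.some '' S) =
      subdivide (G.deleteEdges S) u v := by
  ext x y
  obtain _ | a := x <;> obtain _ | b := y
  · simp
  · simp only [deleteEdges_adj, subdiv_none_some, none_not_mem_image, not_false_iff, and_true]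
  · rw [adj_comm, (subdivide (G.deleteEdges S) u v).adj_comm]
    simp only [deleteEdges_adj, subdiv_none_some, none_not_mem_image, not_false_iff, and_true]
  · simp only [deleteEdges_adj, subdiv_some_some, mem_image_some]
    tauto

lemma HFree_mono {α β γ : Type*} {H : SimpleGraph α} {G : SimpleGraph β} {G' : SimpleGraph γ}
    (f : G ↪g G') : HFree H G' → HFree H G := fun ⟨h⟩ => ⟨fun g => h (f.comp g)⟩

lemma subdivide_hfree {α V : Type*} [Fintype α] {H : SimpleGraph α}
    (hmin : ∀ x : α, 2 ≤ ndeg H x)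
    (hK2 : ∀ x y z : α, ndeg H x = 2 → H.Adj x y → H.Adj x z → y ≠ z → H.Adj y z)
    (G : SimpleGraph V) (u v : V) :
    HFree H (G.deleteEdges {s(u, v)}) → HFree H (subdivide G u v) := by
  intro hfree
  constructor
  intro f
  by_cases h : ∃ x, f x = none
  · obtain ⟨x, hx⟩ := h
    have h2 : 1 < (H.neighborSet x).ncard := hmin x
    obtain ⟨y, z, hy, hz, hyz⟩ := (Set.one_lt_ncard_iff (Set.toFinite _)).mp h2
    have key : ∀ w, H.Adj x w → f w = some u ∨ f w = some v := by
      intro w hw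
      have hadj : (subdivide G u v).Adj none (f w) := by
        rw [← hx]; exact f.map_rel_iff.mpr hw
      match hfw : f w with
      | none => rw [hfw] at hadj; exact absurd hadj (subdivide G u v).irrefl
      | some a =>
        rw [hfw, subdiv_none_some] at hadj
        rcases hadj with rfl | rfl
        · exact Or.inl rfl
        · exact Or.inr rfl
    have main : ∀ y z : α, H.Adj x y → H.Adj x z → y ≠ z →
        f y = some u → f z = some v → False := by
      intro y z hy hz hyz hfy hfz
      have hset : H.neighborSet x = {y, z} := by
        ext w
        constructor
        · intro hw
          rcases key w hw with hw' | hw'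
          · exact Or.inl (f.injective (hw'.trans hfy.symm))
          · exact Or.inr (f.injective (hw'.trans hfz.symm))
        · rintro (rfl | rfl) <;> assumption
      have hdeg : ndeg H x = 2 := by
        rw [ndeg, hset, Set.ncard_pair hyz]
      have hadjyz : H.Adj y z := hK2 x y z hdeg hy hz hyz
      have := f.map_rel_iff.mpr hadjyz
      rw [hfy, hfz] at this
      exact subdiv_not_adj_uv G u v this
    rcases key y hy with h1 | h1 <;> rcases key z hz with h2 | h2
    · exact hyz (f.injective (h1.trans h2.symm))
    · exact main y z hy hz hyz h1 h2
    · exact main z y hz hy hyz.symm h2 h1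
    · exact hyz (f.injective (h1.trans h2.symm))
  · push_neg at h
    have hg : ∀ x, ∃ a, f x = some a := fun x => Option.ne_none_iff_exists'.mp (h x)
    choose g hg using hg
    refine hfree.false ⟨⟨g, fun a b hab => f.injective ?_⟩, ?_⟩
    · rw [hg a, hg b, hab]
    · intro a b
      show (G.deleteEdges {s(u, v)}).Adj (g a) (g b) ↔ H.Adj a b
      rw [deleteEdges_adj, ← f.map_rel_iff, hg a, hg b, subdiv_some_some,
        Set.mem_singleton_iff, Sym2.eq_iff]
      tauto

lemma fwd {α : Type*} [Fintype α] {H : SimpleGraph α}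
    (hmin : ∀ x : α, 2 ≤ ndeg H x)
    (hK2 : ∀ x y z : α, ndeg H x = 2 → H.Adj x y → H.Adj x z → y ≠ z → H.Adj y z)
    (n : ℕ) : ∀ (V : Type) (G : SimpleGraph V) (F : Finset (Sym2 V)),
    ↑F ⊆ G.edgeSet → F.card = n → HFree H (G.deleteEdges ↑F) →
    ∃ q : GraphB, SubdivSteps n ⟨V, G⟩ q ∧ HFree H q.2 := by
  classical
  induction n with
  | zero =>
    intro V G F hsub hcard hfree
    rw [Finset.card_eq_zero] at hcard
    subst hcard
    refine ⟨⟨V, G⟩, rfl, ?_⟩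
    simpa [deleteEdges_empty] using hfree
  | succ n ih =>
    intro V G F hsub hcard hfree
    have hne : F.Nonempty := Finset.card_pos.mp (by omega)
    obtain ⟨e, he⟩ := hne
    have hE : e ∈ G.edgeSet := hsub he
    revert he hE
    induction e using Sym2.ind with
    | _ u v =>
    intro he hE
    have huv : G.Adj u v := hE
    set F'' := F.erase s(u, v) with hF''
    have hcard'' : F''.card = n := by
      rw [hF'', Finset.card_erase_of_mem he, hcard]
      omega
    set F' := F''.image (Sym2.map (Option.some : V → Option V)) with hF'
    have hinjmap : Function.Injective (Sym2.map (Option.some : V → Option V)) :=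
      Sym2.map.injective (Option.some_injective V)
    have hsub' : ↑F' ⊆ (subdivide G u v).edgeSet := by
      intro e' he'
      rw [hF', Finset.coe_image] at he'
      obtain ⟨e0, he0, rfl⟩ := he'
      have he0F : e0 ∈ F := Finset.mem_of_mem_erase he0
      have hne0 : e0 ≠ s(u, v) := Finset.ne_of_mem_erase he0
      have he0E : e0 ∈ G.edgeSet := hsub he0F
      revert hne0 he0E
      induction e0 using Sym2.ind with
      | _ a b =>
      intro hne0 he0E
      rw [Sym2.map_pair_eq, mem_edgeSet, subdiv_some_some]
      rw [ne_eq, Sym2.eq_iff] at hne0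
      push_neg at hne0
      refine ⟨he0E, ?_, ?_⟩ <;> tauto
    have hcard' : F'.card = n := by
      rw [hF', Finset.card_image_of_injective _ hinjmap, hcard'']
    have hfree' : HFree H ((subdivide G u v).deleteEdges ↑F') := by
      rw [hF', Finset.coe_image, deleteEdges_subdivide]
      apply subdivide_hfree hmin hK2
      rw [deleteEdges_deleteEdges]
      have : (↑F'' ∪ {s(u, v)} : Set (Sym2 V)) = ↑F := by
        rw [hF'', Finset.coe_erase, Set.diff_union_of_subset]
        simpa using he
      rwa [this]
    obtain ⟨q, hsteps, hq⟩ := ih (Option V) (subdivide G u v) F' hsub' hcard' hfree'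
    exact ⟨q, ⟨⟨Option V, subdivide G u v⟩, ⟨u, v, huv, ⟨RelIso.refl _⟩⟩, hsteps⟩, hq⟩

def deleteEdges_iso {β γ : Type*} {A : SimpleGraph β} {B : SimpleGraph γ}
    (ι : A ≃g B) (s : Set (Sym2 β)) :
    A.deleteEdges s ≃g B.deleteEdges (Sym2.map ι '' s) where
  toEquiv := ι.toEquiv
  map_rel_iff' := by
    intro a b
    show (B.deleteEdges _).Adj (ι a) (ι b) ↔ (A.deleteEdges s).Adj a b
    rw [deleteEdges_adj, deleteEdges_adj, ι.map_rel_iff]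
    have : s(ι a, ι b) ∈ Sym2.map ι '' s ↔ s(a, b) ∈ s := by
      rw [show s(ι a, ι b) = Sym2.map ι s(a, b) from (Sym2.map_pair_eq _ _ _).symm]
      exact Function.Injective.mem_set_image (Sym2.map.injective ι.injective)
    rw [this]

lemma bwd {α : Type*} [Fintype α] {H : SimpleGraph α} (n : ℕ) :
    ∀ (p q : GraphB), SubdivSteps n p q → HFree H q.2 →
    ∃ F : Finset (Sym2 p.1), ↑F ⊆ p.2.edgeSet ∧ F.card ≤ n ∧ HFree H (p.2.deleteEdges ↑F) := by
  classical
  induction n with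
  | zero =>
    rintro p q rfl hfree
    exact ⟨∅, by simp, by simp, by simpa [deleteEdges_empty] using hfree⟩
  | succ n ih =>
    intro p q hstep hfree
    obtain ⟨W, G⟩ := p
    obtain ⟨p', hstep, hsteps⟩ := hstep
    obtain ⟨u, v, hadj, ⟨ι⟩⟩ := hstep
    obtain ⟨F', hsub', hcard', hfree'⟩ := ih p' q hsteps hfree
    set F'' : Finset (Sym2 (Option W)) := F'.image (Sym2.map ι) with hF''
    have hfreeSD : HFree H ((subdivide G u v).deleteEdges ↑F'') := by
      rw [hF'', Finset.coe_image]
      exact HFree_mono (deleteEdges_iso ι ↑F').symm.toEmbedding hfree'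
    have hsubSD : ↑F'' ⊆ (subdivide G u v).edgeSet := by
      intro e he
      rw [hF'', Finset.coe_image] at he
      obtain ⟨e0, he0, rfl⟩ := he
      exact ι.map_mem_edgeSet_iff.mpr (hsub' he0)
    -- pull down
    set P : Sym2 (Option W) → Prop := fun e => ∃ a b : W, e = s(some a, some b) with hP
    set down : Sym2 (Option W) → Sym2 W := Sym2.map (fun o => o.getD u) with hdown
    set Fd : Finset (Sym2 W) := insert s(u, v) ((F''.filter P).image down) with hFd
    have hmemFd : ∀ a b : W, s(a, b) ∈ Fd ↔
        s(a, b) = s(u, v) ∨ s(some a, some b) ∈ F'' := by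
      intro a b
      rw [hFd, Finset.mem_insert]
      constructor
      · rintro (h | h)
        · exact Or.inl h
        · rw [Finset.mem_image] at h
          obtain ⟨e0, he0, hde⟩ := h
          rw [Finset.mem_filter] at he0
          obtain ⟨he0F, c, d, rfl⟩ := he0
          rw [hdown, Sym2.map_pair_eq] at hde
          simp only [Option.getD_some] at hde
          have : s(Option.some c, Option.some d) = s(Option.some a, Option.some b) := by
            have := congrArg (Sym2.map (Option.some : W → Option W)) hde
            simpa [Sym2.map_pair_eq] using this
          right; rwa [this] at he0F
      · rintro (h | h)
        · exact Or.inl h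
        · right
          rw [Finset.mem_image]
          refine ⟨s(some a, some b), Finset.mem_filter.mpr ⟨h, a, b, rfl⟩, ?_⟩
          rw [hdown, Sym2.map_pair_eq]
          simp
    refine ⟨Fd, ?_, ?_, ?_⟩
    · intro e he
      have he' : e ∈ Fd := he
      rw [hFd, Finset.mem_insert] at he'
      rcases he' with rfl | he'
      · rw [mem_edgeSet]; exact hadj
      · rw [Finset.mem_image] at he'
        obtain ⟨e0, he0, rfl⟩ := he'
        rw [Finset.mem_filter] at he0
        obtain ⟨he0F, c, d, rfl⟩ := he0
        have : s(Option.some c, Option.some d) ∈ (subdivide G u v).edgeSet := hsubSD he0F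
        rw [mem_edgeSet, subdiv_some_some] at this
        rw [hdown, Sym2.map_pair_eq]
        simpa using this.1
    · have hc0 : Fd.card ≤ ((F''.filter P).image down).card + 1 := Finset.card_insert_le _ _
      have hc1 : ((F''.filter P).image down).card ≤ (F''.filter P).card :=
        Finset.card_image_le
      have hc1' : (F''.filter P).card ≤ F''.card := Finset.card_filter_le _ _
      have hc2 : F''.card ≤ F'.card := by rw [hF'']; exact Finset.card_image_le
      omega
    · constructor
      intro f
      have emb : G.deleteEdges ↑Fd ↪g (subdivide G u v).deleteEdges ↑F'' := by
        refine ⟨⟨Option.some, Option.some_injective W⟩, ?_⟩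
        intro a b
        simp only [Function.Embedding.coeFn_mk]
        rw [deleteEdges_adj, deleteEdges_adj, subdiv_some_some]
        constructor
        · rintro ⟨⟨hab, h1, h2⟩, hnm⟩
          refine ⟨hab, ?_⟩
          intro hmem
          rw [Finset.mem_coe, hmemFd] at hmem
          rcases hmem with hmem | hmem
          · rw [Sym2.eq_iff] at hmem; tauto
          · exact hnm hmem
        · rintro ⟨hab, hnm⟩
          have h1 : ¬(a = u ∧ b = v) := by
            rintro ⟨rfl, rfl⟩
            exact hnm (by rw [Finset.mem_coe, hmemFd]; exact Or.inl rfl)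
          have h2 : ¬(a = v ∧ b = u) := by
            rintro ⟨rfl, rfl⟩
            exact hnm (by
              rw [Finset.mem_coe, hmemFd]
              exact Or.inl (by rw [Sym2.eq_iff]; tauto))
          refine ⟨⟨hab, h1, h2⟩, ?_⟩
          intro hmem
          exact hnm (by rw [Finset.mem_coe, hmemFd]; exact Or.inr hmem)
      exact hfreeSD.false (emb.comp f)

/-- Let `H` be a graph with minimum degree at least 2 in which the two neighbors of every
degree-2 vertex are adjacent.  Then for every graph `G` and every `k ≥ 0`: there is a set
`F` of at most `k` edges of `G` with `G − F` `H`-free, if and only if some graph obtained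
from `G` by at most `k` edge subdivisions is `H`-free. -/
theorem HFree_edge_deletion_iff_subdivision
    {α V : Type} [Fintype α] [Fintype V]
    (H : SimpleGraph α)
    (hmin : ∀ x : α, 2 ≤ ndeg H x)
    (hK2 : ∀ x y z : α, ndeg H x = 2 → H.Adj x y → H.Adj x z → y ≠ z → H.Adj y z)
    (G : SimpleGraph V) (k : ℕ) :
    (∃ F : Finset (Sym2 V), ↑F ⊆ G.edgeSet ∧ F.card ≤ k ∧ HFree H (G.deleteEdges ↑F)) ↔
    (∃ n ≤ k, ∃ q : GraphB, SubdivSteps n ⟨V, G⟩ q ∧ HFree H q.2) := by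
  constructor
  · rintro ⟨F, hsub, hcard, hfree⟩
    obtain ⟨q, hsteps, hq⟩ := fwd hmin hK2 F.card V G F hsub rfl hfree
    exact ⟨F.card, hcard, q, hsteps, hq⟩
  · rintro ⟨n, hn, q, hsteps, hq⟩
    obtain ⟨F, hsub, hcard, hfree⟩ := bwd n ⟨V, G⟩ q hsteps hq
    exact ⟨F, hsub, hcard.trans hn, hfree⟩
end

section
/- Let H be a graph containing at least one cycle, and suppose that the set of vertices of H of degree at least 3 induces a subgraph of H with at most one edge. Then every cycle of H contains a vertex whose degree in H is exactly 2. In particular, every shortest cycle of H contains a vertex of degree exactly 2. -/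
open SimpleGraph

/-- Every vertex at which a cycle is based has two distinct neighbors on the cycle. -/
lemma cycle_two_neighbors {α : Type*} {H : SimpleGraph α} {v : α} (p : H.Walk v v)
    (hp : p.IsCycle) : ∃ x y, x ≠ y ∧ H.Adj v x ∧ H.Adj v y ∧
      x ∈ p.support ∧ y ∈ p.support := by
  cases p with
  | nil => exact absurd rfl hp.ne_nil
  | cons h q =>
    rename_i x
    rw [SimpleGraph.Walk.cons_isCycle_iff] at hp
    obtain ⟨hqpath, hne⟩ := hp
    have hqnil : ¬ q.Nil := by
      rw [SimpleGraph.Walk.not_nil_iff_lt_length]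
      by_contra hcon
      push_neg at hcon
      interval_cases hq : q.length
      · exact (h.ne (q.eq_of_length_eq_zero hq).symm).elim
    have hqrnil : ¬ q.reverse.Nil := by
      rwa [SimpleGraph.Walk.not_nil_iff_lt_length, SimpleGraph.Walk.length_reverse,
        ← SimpleGraph.Walk.not_nil_iff_lt_length]
    obtain ⟨y, hadj, q', hq'⟩ := SimpleGraph.Walk.not_nil_iff.mp hqrnil
    have hyedge : s(v, y) ∈ q.edges := by
      have : s(v, y) ∈ q.reverse.edges := by
        rw [hq']; simp
      simpa [SimpleGraph.Walk.edges_reverse, Sym2.eq_swap] using this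
    have hxy : x ≠ y := by
      rintro rfl
      exact hne (by simpa [Sym2.eq_swap] using hyedge)
    refine ⟨x, y, hxy, h, hadj, ?_, ?_⟩
    · simp [SimpleGraph.Walk.support_cons, q.start_mem_support]
    · have : y ∈ q.support := q.snd_mem_support_of_mem_edges hyedge
      simp [SimpleGraph.Walk.support_cons, this]

lemma cycle_deg_ge_two {α : Type*} [DecidableEq α] [Finite α] {H : SimpleGraph α} {u : α} (c : H.Walk u u)
    (hc : c.IsCycle) {w : α} (hw : w ∈ c.support) : 2 ≤ ndeg H w := by
  obtain ⟨x, y, hxy, hx, hy, -, -⟩ := cycle_two_neighbors (c.rotate w hw) (hc.rotate hw)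
  have hsub : ({x, y} : Set α) ⊆ H.neighborSet w := by
    rintro z (rfl | rfl) <;> assumption
  calc 2 = ({x, y} : Set α).ncard := (Set.ncard_pair hxy).symm
    _ ≤ (H.neighborSet w).ncard := by
        exact Set.ncard_le_ncard hsub (Set.toFinite _)

/-- Let `H` be a graph containing at least one cycle such that the set of vertices of degree
at least 3 induces a subgraph with at most one edge.  Then every cycle of `H` contains a
vertex of degree exactly 2; in particular every shortest cycle (one whose length equals the
girth) contains a vertex of degree exactly 2. -/
theorem cycle_has_degree_two_vertex
    {α : Type*} [Fintype α] (H : SimpleGraph α)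
    (hcyc : ¬ H.IsAcyclic)
    (honeEdge : ∀ x y x' y' : α, 3 ≤ ndeg H x → 3 ≤ ndeg H y → 3 ≤ ndeg H x' →
      3 ≤ ndeg H y' → H.Adj x y → H.Adj x' y' → s(x, y) = s(x', y')) :
    (∀ (u : α) (c : H.Walk u u), c.IsCycle → ∃ w ∈ c.support, ndeg H w = 2) ∧
    (∀ (u : α) (c : H.Walk u u), c.IsCycle → (c.length : ℕ∞) = H.girth →
      ∃ w ∈ c.support, ndeg H w = 2) := by
  have main : ∀ (u : α) (c : H.Walk u u), c.IsCycle → ∃ w ∈ c.support, ndeg H w = 2 := by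
    intro u c hc
    classical
    by_contra hcon
    push_neg at hcon
    have hdeg3 : ∀ w ∈ c.support, 3 ≤ ndeg H w := by
      intro w hw
      have h2 := cycle_deg_ge_two c hc hw
      have := hcon w hw
      omega
    obtain ⟨x, y, hxy, hx, hy, hxs, hys⟩ := cycle_two_neighbors c hc
    have hus : u ∈ c.support := c.start_mem_support
    have := honeEdge u x u y (hdeg3 u hus) (hdeg3 x hxs) (hdeg3 u hus) (hdeg3 y hys) hx hy
    rw [Sym2.eq_iff] at this
    rcases this with ⟨-, rfl⟩ | ⟨rfl, rfl⟩
    · exact hxy rfl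
    · exact H.irrefl hx
  exact ⟨main, fun u c hc _ => main u c hc⟩
end

section
/- Let H be a graph in which the set of vertices of degree at least 3 induces a subgraph with at most one edge, and suppose H contains a roof triangle, i.e., a triangle with exactly two vertices of degree at least 3 in H; let a and b be these two vertices. Then every roof triangle of H contains a and b, and every vertex of H that lies on some roof triangle and is different from a and b has degree exactly 2 in H and its neighborhood is exactly {a, b}. Consequently, if X denotes the set of all vertices of H belonging to some roof triangle, then H[X] is a book graph with common edge ab: a and b are adjacent, and every other vertex of X is adjacent precisely to a and b. -/
open SimpleGraph

/-- Three pairwise adjacent vertices. -/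
def IsTriangle {α : Type*} (H : SimpleGraph α) (x y z : α) : Prop :=
  H.Adj x y ∧ H.Adj y z ∧ H.Adj x z

/-- A roof triangle: a triangle containing exactly two vertices of degree at least 3. -/
def IsRoofTriangle {α : Type*} (H : SimpleGraph α) (x y z : α) : Prop :=
  IsTriangle H x y z ∧ (({x, y, z} : Set α) ∩ {w | 3 ≤ ndeg H w}).ncard = 2

lemma tri_adj {α : Type*} {H : SimpleGraph α} {x y z u v : α}
    (ht : IsTriangle H x y z) (hu : u ∈ ({x, y, z} : Set α))
    (hv : v ∈ ({x, y, z} : Set α)) (huv : u ≠ v) : H.Adj u v := by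
  obtain ⟨h1, h2, h3⟩ := ht
  simp only [Set.mem_insert_iff, Set.mem_singleton_iff] at hu hv
  rcases hu with rfl | rfl | rfl <;> rcases hv with rfl | rfl | rfl <;>
    first
      | exact absurd rfl huv
      | assumption
      | exact h1.symm
      | exact h2.symm
      | exact h3.symm

/-- Let `H` be a graph whose vertices of degree at least 3 induce a subgraph with at most
one edge, containing a roof triangle with attachment vertices `a` and `b`.  Then `a` and `b`
are adjacent, every roof triangle of `H` contains both `a` and `b`, and every vertex on a
roof triangle other than `a`, `b` has degree exactly 2 with neighborhood `{a, b}`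
(so the union of the roof triangles induces a book graph with common edge `ab`). -/
theorem roof_triangles_form_book
    {α : Type*} [Fintype α] (H : SimpleGraph α) (a b : α)
    (honeEdge : ∀ x y x' y' : α, 3 ≤ ndeg H x → 3 ≤ ndeg H y → 3 ≤ ndeg H x' →
      3 ≤ ndeg H y' → H.Adj x y → H.Adj x' y' → s(x, y) = s(x', y'))
    (hroof : ∃ z : α, IsRoofTriangle H a b z ∧ 3 ≤ ndeg H a ∧ 3 ≤ ndeg H b) :
    H.Adj a b ∧
    (∀ x y z : α, IsRoofTriangle H x y z →
        (a = x ∨ a = y ∨ a = z) ∧ (b = x ∨ b = y ∨ b = z)) ∧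
    (∀ x y z w : α, IsRoofTriangle H x y z → (w = x ∨ w = y ∨ w = z) →
        w ≠ a → w ≠ b → ndeg H w = 2 ∧ H.neighborSet w = {a, b}) := by
  obtain ⟨z0, ⟨⟨⟨hab, _, _⟩, _⟩, ha3, hb3⟩⟩ := hroof
  -- key: for any roof triangle, the intersection with high-degree vertices is {a,b}
  have key : ∀ x y z : α, IsRoofTriangle H x y z →
      ({x, y, z} : Set α) ∩ {w | 3 ≤ ndeg H w} = {a, b} := by
    intro x y z ⟨ht, hc⟩
    obtain ⟨u, v, huv, hset⟩ := Set.ncard_eq_two.mp hc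
    have hu : u ∈ ({x, y, z} : Set α) ∩ {w | 3 ≤ ndeg H w} := hset ▸ Set.mem_insert u {v}
    have hv : v ∈ ({x, y, z} : Set α) ∩ {w | 3 ≤ ndeg H w} := by
      rw [hset]; exact Set.mem_insert_of_mem _ rfl
    have hadj : H.Adj u v := tri_adj ht hu.1 hv.1 huv
    have hsym := honeEdge u v a b hu.2 hv.2 ha3 hb3 hadj hab
    rw [Sym2.eq_iff] at hsym
    rw [hset]
    rcases hsym with ⟨rfl, rfl⟩ | ⟨rfl, rfl⟩
    · rfl
    · exact Set.pair_comm _ _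
  have mem2 : ∀ x y z : α, IsRoofTriangle H x y z →
      a ∈ ({x, y, z} : Set α) ∧ b ∈ ({x, y, z} : Set α) := by
    intro x y z hr
    have h := key x y z hr
    constructor
    · have : a ∈ ({a, b} : Set α) := Set.mem_insert a {b}
      rw [← h] at this; exact this.1
    · have : b ∈ ({a, b} : Set α) := Set.mem_insert_of_mem _ rfl
      rw [← h] at this; exact this.1
  refine ⟨hab, ?_, ?_⟩
  · intro x y z hr
    have := mem2 x y z hr
    simp only [Set.mem_insert_iff, Set.mem_singleton_iff] at this
    exact this
  · intro x y z w hr hw hwa hwb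
    have hwmem : w ∈ ({x, y, z} : Set α) := by
      simp only [Set.mem_insert_iff, Set.mem_singleton_iff]; exact hw
    obtain ⟨hamem, hbmem⟩ := mem2 x y z hr
    have hwa' : H.Adj w a := tri_adj hr.1 hwmem hamem hwa
    have hwb' : H.Adj w b := tri_adj hr.1 hwmem hbmem hwb
    have hsub : ({a, b} : Set α) ⊆ H.neighborSet w := by
      intro t ht
      rcases ht with rfl | ht
      · exact hwa'
      · rw [Set.mem_singleton_iff] at ht; subst ht; exact hwb'
    have hne : a ≠ b := hab.ne
    have hpair : ({a, b} : Set α).ncard = 2 := Set.ncard_pair hne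
    have hlow : ndeg H w ≤ 2 := by
      by_contra hcon
      push_neg at hcon
      have : w ∈ ({x, y, z} : Set α) ∩ {w | 3 ≤ ndeg H w} := ⟨hwmem, hcon⟩
      rw [key x y z hr] at this
      rcases this with h | h
      · exact hwa h
      · exact hwb (Set.mem_singleton_iff.mp h)
    have hge : 2 ≤ ndeg H w := by
      have := Set.ncard_le_ncard hsub (Set.toFinite _)
      rwa [hpair] at this
    have hdeg : ndeg H w = 2 := le_antisymm hlow hge
    refine ⟨hdeg, ?_⟩
    have := Set.eq_of_subset_of_ncard_le hsub (by rw [hpair]; exact hlow) (Set.toFinite _)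
    exact this.symm
end

section
/- Let H be a graph containing at least one cycle, let g be the girth of H, and let e be an edge of H that lies on at least one cycle of H of length g. Let Q be the graph obtained from H by subdividing the edge e once. Then the number of cycles of length g in Q is strictly smaller than the number of cycles of length g in H, and the girth of Q is at least g. Consequently, Q contains no subgraph isomorphic to H; in particular, Q contains no induced subgraph isomorphic to H. -/
open SimpleGraph

namespace SubdivideAux

variable {α : Type*} {H : SimpleGraph α} {u v : α}

lemma adj_some_some {a b : α} :
    (subdivide H u v).Adj (some a) (some b) ↔
      H.Adj a b ∧ ¬(a = u ∧ b = v) ∧ ¬(a = v ∧ b = u) := by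
  rw [subdivide, fromRel_adj]
  constructor
  · rintro ⟨hne, (⟨a', b', ha, hb, h1, h2, h3⟩ | ⟨h, _⟩) | (⟨a', b', ha, hb, h1, h2, h3⟩ | ⟨h, _⟩)⟩
    · obtain rfl : a = a' := by injection ha
      obtain rfl : b = b' := by injection hb
      exact ⟨h1, h2, h3⟩
    · exact absurd h (by simp)
    · obtain rfl : b = a' := by injection ha
      obtain rfl : a = b' := by injection hb
      exact ⟨h1.symm, fun hx => h3 ⟨hx.2, hx.1⟩, fun hx => h2 ⟨hx.2, hx.1⟩⟩
    · exact absurd h (by simp)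
  · rintro ⟨h1, h2, h3⟩
    exact ⟨by simpa using h1.ne, Or.inl (Or.inl ⟨a, b, rfl, rfl, h1, h2, h3⟩)⟩

lemma adj_none {x : Option α} :
    (subdivide H u v).Adj none x ↔ x = some u ∨ x = some v := by
  rw [subdivide, fromRel_adj]
  constructor
  · rintro ⟨hne, (⟨a', b', ha, _⟩ | ⟨_, h⟩) | (⟨a', b', _, hb, _⟩ | ⟨h1, _⟩)⟩
    · exact absurd ha (by simp)
    · exact h
    · exact absurd hb (by simp)
    · exact absurd h1.symm hne
  · rintro (rfl | rfl)
    · exact ⟨by simp, Or.inl (Or.inr ⟨rfl, Or.inl rfl⟩)⟩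
    · exact ⟨by simp, Or.inl (Or.inr ⟨rfl, Or.inr rfl⟩)⟩

lemma pull {x y : Option α} (p : (subdivide H u v).Walk x y) (hn : none ∉ p.support) :
    ∀ a b, x = some a → y = some b →
    ∃ q : H.Walk a b, q.length = p.length ∧ q.support.map some = p.support ∧
      s(u, v) ∉ q.edges ∧ q.edges.map (Sym2.map some) = p.edges := by
  induction p with
  | nil =>
    rintro a b rfl hb
    obtain rfl : a = b := by injection hb
    exact ⟨Walk.nil, by simp, by simp, by simp, by simp⟩
  | @cons x z y h p ih =>
    rintro a b rfl rfl
    rw [Walk.support_cons] at hn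
    have hn' : none ∉ p.support := fun hh => hn (List.mem_cons_of_mem _ hh)
    obtain ⟨c, rfl⟩ : ∃ c, z = some c := by
      rcases z with _ | c
      · exact absurd (List.mem_cons_of_mem _ p.start_mem_support) hn
      · exact ⟨c, rfl⟩
    obtain ⟨hac, h2, h3⟩ := adj_some_some.mp h
    obtain ⟨q, hl, hs, he, hem⟩ := ih hn' c b rfl rfl
    refine ⟨Walk.cons hac q, by simp [hl], by simp [hs], ?_, by simp [hem]⟩
    rw [Walk.edges_cons, List.mem_cons]
    rintro (hh | hh)
    · rw [Sym2.eq_iff] at hh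
      rcases hh with ⟨rfl, rfl⟩ | ⟨rfl, rfl⟩
      · exact h2 ⟨rfl, rfl⟩
      · exact h3 ⟨rfl, rfl⟩
    · exact he hh

lemma pull_cycle {a : α} (c : (subdivide H u v).Walk (some a) (some a))
    (hc : c.IsCycle) (hn : none ∉ c.support) :
    ∃ q : H.Walk a a, q.IsCycle ∧ q.length = c.length ∧
      s(u, v) ∉ q.edges ∧ q.edges.map (Sym2.map some) = c.edges := by
  obtain ⟨q, hl, hs, he, hem⟩ := pull c hn a a rfl rfl
  refine ⟨q, ⟨⟨⟨?_⟩, ?_⟩, ?_⟩, hl, he, hem⟩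
  · have := hc.isCircuit.isTrail.edges_nodup
    rw [← hem] at this
    exact this.of_map _
  · intro hq
    have := hc.three_le_length
    rw [← hl, hq] at this
    simp at this
  · have := hc.support_nodup
    rw [← hs, ← List.map_tail] at this
    exact this.of_map _

lemma length_rotate {V : Type*} {x y : V} {G : SimpleGraph V} [DecidableEq V] (c : G.Walk y y)
    (h : x ∈ c.support) : (c.rotate x h).length = c.length := by
  have h1 := congrArg Walk.length (c.take_spec h)
  rw [Walk.length_append] at h1
  simp only [Walk.rotate, Walk.length_append]
  omega

lemma cycle_through_none (huv : H.Adj u v) {x : Option α}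
    (c : (subdivide H u v).Walk x x) (hc : c.IsCycle) (hn : none ∈ c.support) :
    ∃ (w : α) (q : H.Walk w w), q.IsCycle ∧ q.length + 1 = c.length := by
  classical
  obtain ⟨c', hc', hlen⟩ : ∃ c' : (subdivide H u v).Walk none none,
      c'.IsCycle ∧ c'.length = c.length :=
    ⟨c.rotate none hn, hc.rotate hn, length_rotate c hn⟩
  have h3 := hc'.three_le_length
  obtain ⟨z, h1, p, rfl⟩ := (Walk.not_nil_iff (p := c')).mp
    (by rw [Walk.not_nil_iff_lt_length]; omega)
  have hzuv : z = some u ∨ z = some v := adj_none.mp h1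
  rw [Walk.length_cons] at hlen h3
  obtain ⟨y, h2, r, hr⟩ := (Walk.not_nil_iff (p := p.reverse)).mp
    (by rw [Walk.not_nil_iff_lt_length, Walk.length_reverse]; omega)
  have hyuv : y = some u ∨ y = some v := adj_none.mp h2
  have hps : p = r.reverse.concat h2.symm := by
    have h4 := congrArg Walk.reverse hr
    rw [Walk.reverse_reverse] at h4
    rw [h4, Walk.reverse_cons, ← Walk.concat_eq_append]
  have htail : p.support.Nodup := by
    have := hc'.support_nodup
    rwa [Walk.support_cons, List.tail_cons] at this
  have hpsup : p.support = r.reverse.support ++ [none] := by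
    rw [hps, Walk.support_concat]
  have hnone_r : none ∉ r.reverse.support := by
    rw [hpsup] at htail
    intro hh
    exact List.disjoint_of_nodup_append htail hh (List.mem_singleton_self none)
  have hr_nodup : r.reverse.support.Nodup := by
    rw [hpsup] at htail; exact htail.of_append_left
  have hped : p.edges = r.reverse.edges ++ [s(y, none)] := by
    rw [hps, Walk.edges_concat, List.concat_eq_append]
  have htrail := hc'.isCircuit.isTrail.edges_nodup
  rw [Walk.edges_cons] at htrail
  have hnz_ne : s(none, z) ∉ p.edges := (List.nodup_cons.mp htrail).1
  have hp_ed_nodup : p.edges.Nodup := (List.nodup_cons.mp htrail).2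
  have hre_nodup : r.reverse.edges.Nodup := by
    rw [hped] at hp_ed_nodup; exact hp_ed_nodup.of_append_left
  have hyz : y ≠ z := by
    rintro rfl
    apply hnz_ne
    rw [hped]
    refine List.mem_append_right _ ?_
    rw [List.mem_singleton, Sym2.eq_swap]
  have hrl : r.reverse.length + 1 = p.length := by rw [hps]; simp
  rcases hzuv with rfl | rfl
  · obtain rfl : y = some v := by
      rcases hyuv with rfl | rfl
      · exact absurd rfl hyz
      · rfl
    obtain ⟨q, hql, hqs, hque, hqem⟩ := pull r.reverse hnone_r u v rfl rfl
    refine ⟨v, Walk.cons huv.symm q, ⟨⟨⟨?_⟩, by simp⟩, ?_⟩, ?_⟩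
    · rw [Walk.edges_cons, List.nodup_cons]
      refine ⟨by rw [Sym2.eq_swap]; exact hque, ?_⟩
      have : (q.edges.map (Sym2.map some)).Nodup := by rw [hqem]; exact hre_nodup
      exact this.of_map _
    · rw [Walk.support_cons, List.tail_cons]
      have : (q.support.map some).Nodup := by rw [hqs]; exact hr_nodup
      exact this.of_map _
    · rw [Walk.length_cons, hql]; omega
  · obtain rfl : y = some u := by
      rcases hyuv with rfl | rfl
      · rfl
      · exact absurd rfl hyz
    obtain ⟨q, hql, hqs, hque, hqem⟩ := pull r.reverse hnone_r v u rfl rfl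
    refine ⟨u, Walk.cons huv q, ⟨⟨⟨?_⟩, by simp⟩, ?_⟩, ?_⟩
    · rw [Walk.edges_cons, List.nodup_cons]
      refine ⟨hque, ?_⟩
      have : (q.edges.map (Sym2.map some)).Nodup := by rw [hqem]; exact hre_nodup
      exact this.of_map _
    · rw [Walk.support_cons, List.tail_cons]
      have : (q.support.map some).Nodup := by rw [hqs]; exact hr_nodup
      exact this.of_map _
    · rw [Walk.length_cons, hql]; omega

end SubdivideAux

namespace SubdivideAux

variable {α : Type*} {H : SimpleGraph α} {u v : α}

lemma exists_cycle (huv : H.Adj u v)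
    (hreach : (H \ fromEdgeSet {s(u, v)}).Reachable u v) :
    ∃ c : (subdivide H u v).Walk none none, c.IsCycle := by
  classical
  obtain ⟨pw⟩ := hreach
  have hφ : ∀ {a b : α}, (H \ fromEdgeSet {s(u, v)}).Adj a b →
      (subdivide H u v).Adj (some a) (some b) := by
    intro a b hab
    rw [sdiff_adj, fromEdgeSet_adj] at hab
    obtain ⟨h1, h2⟩ := hab
    have hne : s(a, b) ≠ s(u, v) := fun hh => h2 ⟨by simpa using hh, h1.ne⟩
    refine adj_some_some.mpr ⟨h1, ?_, ?_⟩
    · rintro ⟨rfl, rfl⟩; exact hne rfl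
    · rintro ⟨rfl, rfl⟩; exact hne Sym2.eq_swap
  let φ : (H \ fromEdgeSet {s(u, v)}) →g (subdivide H u v) :=
    ⟨some, fun h => hφ h⟩
  have hq1 := pw.toPath.2
  set q1 := (pw.toPath : (H \ fromEdgeSet {s(u, v)}).Walk u v) with hq1def
  let q2 := q1.map φ
  have hq2 : q2.IsPath := Walk.map_isPath_of_injective (Option.some_injective α) hq1
  have hn2 : none ∉ q2.support := by
    show none ∉ (q1.map φ).support
    rw [Walk.support_map]
    simp [φ]
  have h1 : (subdivide H u v).Adj none (some u) := adj_none.mpr (Or.inl rfl)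
  have h2 : (subdivide H u v).Adj (some v) none := (adj_none.mpr (Or.inr rfl)).symm
  refine ⟨Walk.cons h1 (q2.concat h2), ?_⟩
  rw [Walk.cons_isCycle_iff]
  constructor
  · rw [Walk.isPath_def, Walk.support_concat, List.nodup_append]
    refine ⟨hq2.support_nodup, List.nodup_singleton _, ?_⟩
    intro x hx _ hx2 rfl
    rw [List.mem_singleton] at hx2
    subst hx2
    exact hn2 hx
  · rw [Walk.edges_concat, List.concat_eq_append, List.mem_append]
    rintro (hh | hh)
    · exact hn2 (q2.fst_mem_support_of_mem_edges hh)
    · rw [List.mem_singleton, Sym2.eq_iff] at hh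
      rcases hh with ⟨hh, -⟩ | ⟨-, hh⟩
      · exact absurd (hh : none = some v) (by simp)
      · exact huv.ne (by injection hh)

end SubdivideAux

/-- The edge sets of the cycles of length `g` in `G`.  A cycle, viewed as a subgraph
(i.e. up to rotation and reflection), is determined by its edge set, so the cardinality of
this collection is the number of cycles of length `g` in `G`. -/
def cycleEdgeSets {V : Type*} (G : SimpleGraph V) (g : ℕ) : Set (Set (Sym2 V)) :=
  {s | ∃ (u : V) (c : G.Walk u u), c.IsCycle ∧ c.length = g ∧ s = {e | e ∈ c.edges}}

open SubdivideAux in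
/-- Let `H` have girth `g`, and let `uv` be an edge of `H` lying on some cycle of length `g`.
Let `Q` be obtained from `H` by subdividing `uv` once.  Then `Q` has strictly fewer cycles of
length `g` than `H`, the girth of `Q` is at least `g`, and consequently `Q` contains no
subgraph isomorphic to `H` — in particular, no induced subgraph isomorphic to `H`. -/
theorem subdividing_girth_edge_destroys_H
    {α : Type*} [Fintype α] (H : SimpleGraph α) (g : ℕ)
    (hg : H.girth = (g : ℕ∞))
    (u v : α) (huv : H.Adj u v)
    (hcyc : ∃ (w : α) (c : H.Walk w w), c.IsCycle ∧ c.length = g ∧ s(u, v) ∈ c.edges) :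
    (cycleEdgeSets (subdivide H u v) g).ncard < (cycleEdgeSets H g).ncard ∧
    (g : ℕ∞) ≤ (subdivide H u v).girth ∧
    (¬ ∃ f : α → Option α, Function.Injective f ∧
        ∀ p q : α, H.Adj p q → (subdivide H u v).Adj (f p) (f q)) ∧
    IsEmpty (H ↪g subdivide H u v) := by
  classical
  obtain ⟨w0, c0, hc0, hc0len, hc0e⟩ := hcyc
  have hHnot : ¬ H.IsAcyclic := fun hA => hA _ hc0
  have hHe : H.egirth = (g : ℕ∞) := by
    rw [← ENat.coe_toNat (show H.egirth ≠ ⊤ by rwa [ne_eq, egirth_eq_top])]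
    exact hg
  have hHbound : ∀ (w : α) (q : H.Walk w w), q.IsCycle → g ≤ q.length := by
    intro w q hq
    have h := le_egirth.mp hHe.ge w q hq
    exact_mod_cast h
  have hQbound : ∀ (x : Option α) (c : (subdivide H u v).Walk x x), c.IsCycle →
      g ≤ c.length ∧ (c.length = g → none ∉ c.support) := by
    intro x c hc
    by_cases hn : none ∈ c.support
    · obtain ⟨w, q, hq, hl⟩ := cycle_through_none huv c hc hn
      have hb := hHbound w q hq
      exact ⟨by omega, fun he => absurd he (by omega)⟩
    · obtain ⟨a, rfl⟩ : ∃ a, x = some a := by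
        cases x with
        | none => exact absurd c.start_mem_support hn
        | some a => exact ⟨a, rfl⟩
      obtain ⟨q, hq, hl, -, -⟩ := pull_cycle c hc hn
      exact ⟨hl ▸ hHbound _ q hq, fun _ => hn⟩
  -- conjunct 2
  have hreach : (H \ fromEdgeSet {s(u, v)}).Reachable u v :=
    (adj_and_reachable_delete_edges_iff_exists_cycle.mpr ⟨w0, c0, hc0, hc0e⟩).2
  obtain ⟨W, hW⟩ := exists_cycle huv hreach
  have hQnot : ¬ (subdivide H u v).IsAcyclic := fun hA => hA _ hW
  have hQe : (g : ℕ∞) ≤ (subdivide H u v).egirth :=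
    le_egirth.mpr (fun x c hc => by exact_mod_cast (hQbound x c hc).1)
  have conj2 : (g : ℕ∞) ≤ ((subdivide H u v).girth : ℕ∞) := by
    have hne : (subdivide H u v).egirth ≠ ⊤ := by rwa [ne_eq, egirth_eq_top]
    show (g : ℕ∞) ≤ (((subdivide H u v).egirth.toNat : ℕ) : ℕ∞)
    rw [ENat.coe_toNat hne]
    exact hQe
  -- conjunct 1
  have hfinH : (cycleEdgeSets H g).Finite := Set.toFinite _
  have hE0 : ({e | e ∈ c0.edges} : Set (Sym2 α)) ∈ cycleEdgeSets H g :=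
    ⟨w0, c0, hc0, hc0len, rfl⟩
  have key : ∀ S ∈ cycleEdgeSets (subdivide H u v) g,
      (Sym2.map some ⁻¹' S ∈ cycleEdgeSets H g ∧ s(u, v) ∉ Sym2.map some ⁻¹' S ∧
        Sym2.map some '' (Sym2.map some ⁻¹' S) = S) := by
    rintro S ⟨x, c, hc, hclen, rfl⟩
    have hn : none ∉ c.support := (hQbound x c hc).2 hclen
    obtain ⟨a, rfl⟩ : ∃ a, x = some a := by
      cases x with
      | none => exact absurd c.start_mem_support hn
      | some a => exact ⟨a, rfl⟩
    obtain ⟨q, hq, hl, hque, hqem⟩ := pull_cycle c hc hn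
    have hpre : Sym2.map some ⁻¹' {e | e ∈ c.edges} = {e | e ∈ q.edges} := by
      ext e
      simp only [Set.mem_preimage, Set.mem_setOf_eq, ← hqem, List.mem_map]
      constructor
      · rintro ⟨e', he', hee⟩
        rwa [← Sym2.map.injective (Option.some_injective α) hee]
      · intro he; exact ⟨e, he, rfl⟩
    rw [hpre]
    refine ⟨⟨a, q, hq, by omega, rfl⟩, hque, ?_⟩
    ext e
    simp only [Set.mem_image, Set.mem_setOf_eq, ← hqem, List.mem_map]
  have hinjOn : Set.InjOn (fun S => Sym2.map some ⁻¹' S)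
      (cycleEdgeSets (subdivide H u v) g) := by
    intro S1 h1 S2 h2 he
    rw [← (key S1 h1).2.2, ← (key S2 h2).2.2]
    exact congrArg _ he
  have hsub : (fun S => Sym2.map some ⁻¹' S) '' (cycleEdgeSets (subdivide H u v) g) ⊂
      cycleEdgeSets H g := by
    constructor
    · rintro _ ⟨S, hS, rfl⟩; exact (key S hS).1
    · intro hcon
      obtain ⟨S, hS, hpre2⟩ := hcon hE0
      apply (key S hS).2.1
      simp only at hpre2
      rw [hpre2]
      exact hc0e
  have conj1 : (cycleEdgeSets (subdivide H u v) g).ncard < (cycleEdgeSets H g).ncard := by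
    calc (cycleEdgeSets (subdivide H u v) g).ncard
        = ((fun S => Sym2.map some ⁻¹' S) '' cycleEdgeSets (subdivide H u v) g).ncard :=
          (Set.ncard_image_of_injOn hinjOn).symm
      _ < (cycleEdgeSets H g).ncard := Set.ncard_lt_ncard hsub hfinH
  -- conjunct 3
  have conj3 : ¬ ∃ f : α → Option α, Function.Injective f ∧
      ∀ p q : α, H.Adj p q → (subdivide H u v).Adj (f p) (f q) := by
    rintro ⟨f, hinj, hadj⟩
    let φ : H →g (subdivide H u v) := ⟨f, fun {a b} h => hadj a b h⟩
    have hmono : ∀ S ∈ cycleEdgeSets H g,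
        Sym2.map f '' S ∈ cycleEdgeSets (subdivide H u v) g := by
      rintro S ⟨w, c, hc, hlen, rfl⟩
      refine ⟨f w, c.map φ, (Walk.map_isCycle_iff_of_injective hinj).mpr hc,
        by rw [Walk.length_map]; exact hlen, ?_⟩
      ext e
      simp only [Set.mem_image, Set.mem_setOf_eq, Walk.edges_map, List.mem_map]
      tauto
    have hinj2 : Set.InjOn (fun S => Sym2.map f '' S) (cycleEdgeSets H g) :=
      (Set.image_injective.mpr (Sym2.map.injective hinj)).injOn
    have hle : (cycleEdgeSets H g).ncard ≤ (cycleEdgeSets (subdivide H u v) g).ncard := by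
      calc (cycleEdgeSets H g).ncard
          = ((fun S => Sym2.map f '' S) '' cycleEdgeSets H g).ncard :=
            (Set.ncard_image_of_injOn hinj2).symm
        _ ≤ (cycleEdgeSets (subdivide H u v) g).ncard :=
            Set.ncard_le_ncard (by rintro _ ⟨S, hS, rfl⟩; exact hmono S hS) (Set.toFinite _)
    omega
  exact ⟨conj1, conj2, conj3,
    ⟨fun e => conj3 ⟨e, e.injective, fun p q h => e.toHom.map_adj h⟩⟩⟩
end

section
/- Let H be a graph whose vertices of degree at least 3 induce a subgraph with at most one edge, and which contains a roof triangle; let a and b be the two attachment vertices (so all roof triangles of H have attachment vertices a, b). Let X be the set of vertices of H that belong to some roof triangle, let H' := H[X] (a book graph with common edge ab), and let R := H − (X ∖ {a, b}). For a graph G₀ and an integer k ≥ 0, construct the graph G as follows: start with G₀; for every edge uv of G₀ and every i ∈ {1, …, k+1}, add a fresh disjoint copy Rⁱ_{uv} of R − {a, b} with all edges inside the copy exactly as in R − {a, b}; in each copy, join the copy of every R-neighbor of a to u and the copy of every R-neighbor of b to v; add no other edges. Then the following are equivalent: (i) there exists F ⊆ E(G₀) with |F| ≤ k such that G₀ − F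 is H'-free; (ii) some graph obtained from G by at most k edge subdivisions is H-free. -/
open SimpleGraph

/-- The set `X` of vertices of `H` that belong to some roof triangle. -/
def roofVerts {α : Type*} (H : SimpleGraph α) : Set α :=
  {w | ∃ y z : α, IsRoofTriangle H w y z}

/-- The graph `G` built from `G₀` in the roof-triangle reduction.  `D` is an orientation of
the edges of `G₀`.  For each (oriented) edge `(u, v)` of `G₀` and each `i ∈ Fin (k+1)` we
attach a fresh copy of `R − {a, b}` (whose vertex set is the complement of
`roofVerts H`, with internal edges exactly as in `H`): the copy of each `R`-neighbor of `a`
is joined to `u`, and the copy of each `R`-neighbor of `b` is joined to `v`.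
No other edges are added. -/
def attachRoof {α V₀ : Type} (H : SimpleGraph α) (a b : α)
    (G₀ : SimpleGraph V₀) (D : Set (V₀ × V₀)) (k : ℕ) :
    SimpleGraph (V₀ ⊕ (↥D × Fin (k + 1) × ↥(roofVerts H)ᶜ)) :=
  SimpleGraph.fromRel (fun p q =>
    (∃ u v : V₀, p = Sum.inl u ∧ q = Sum.inl v ∧ G₀.Adj u v) ∨
    (∃ (d : ↥D) (i : Fin (k + 1)) (r r' : ↥(roofVerts H)ᶜ),
        p = Sum.inr (d, i, r) ∧ q = Sum.inr (d, i, r') ∧ H.Adj ↑r ↑r') ∨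
    (∃ (d : ↥D) (i : Fin (k + 1)) (r : ↥(roofVerts H)ᶜ) (w : V₀),
        p = Sum.inr (d, i, r) ∧ q = Sum.inl w ∧
        ((w = (↑d : V₀ × V₀).1 ∧ H.Adj ↑r a) ∨ (w = (↑d : V₀ × V₀).2 ∧ H.Adj ↑r b))))

namespace RoofAux


open Sum

lemma subdivide_adj_some_some {V : Type*} (G : SimpleGraph V) (u v x y : V) :
    (subdivide G u v).Adj (some x) (some y) ↔
      G.Adj x y ∧ ¬(x = u ∧ y = v) ∧ ¬(x = v ∧ y = u) := by
  simp only [subdivide, fromRel_adj]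
  constructor
  · rintro ⟨hne, h | h⟩
    · rcases h with ⟨a, b, ha, hb, h1, h2, h3⟩ | ⟨h, _⟩
      · cases Option.some.inj ha; cases Option.some.inj hb; exact ⟨h1, h2, h3⟩
      · exact absurd h (by simp)
    · rcases h with ⟨a, b, ha, hb, h1, h2, h3⟩ | ⟨h, _⟩
      · cases Option.some.inj ha; cases Option.some.inj hb
        exact ⟨h1.symm, fun ⟨e1, e2⟩ => h3 ⟨e2, e1⟩, fun ⟨e1, e2⟩ => h2 ⟨e2, e1⟩⟩
      · exact absurd h (by simp)
  · rintro ⟨h1, h2, h3⟩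
    exact ⟨by simpa using h1.ne, Or.inl (Or.inl ⟨x, y, rfl, rfl, h1, h2, h3⟩)⟩

lemma subdivide_adj_none {V : Type*} (G : SimpleGraph V) (u v y : V) :
    (subdivide G u v).Adj none (some y) ↔ y = u ∨ y = v := by
  simp only [subdivide, fromRel_adj]
  constructor
  · rintro ⟨-, h | h⟩
    · rcases h with ⟨a, b, ha, -⟩ | ⟨-, hy⟩
      · exact absurd ha (by simp)
      · rcases hy with h | h <;> [left; right] <;> exact Option.some.inj h
    · rcases h with ⟨a, b, -, hb, -⟩ | ⟨h, -⟩
      · exact absurd hb (by simp)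
      · exact absurd h (by simp)
  · rintro (rfl | rfl)
    · exact ⟨by simp, Or.inl (Or.inr (by simp))⟩
    · exact ⟨by simp, Or.inl (Or.inr (by simp))⟩

lemma subdivide_adj_some_some' {V : Type*} (G : SimpleGraph V) (u v x y : V) :
    (subdivide G u v).Adj (some x) (some y) ↔ G.Adj x y ∧ s(x, y) ≠ s(u, v) := by
  rw [subdivide_adj_some_some]
  constructor
  · rintro ⟨h1, h2, h3⟩
    refine ⟨h1, fun he => ?_⟩
    rcases Sym2.eq_iff.1 he with ⟨rfl, rfl⟩ | ⟨rfl, rfl⟩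
    exacts [h2 ⟨rfl, rfl⟩, h3 ⟨rfl, rfl⟩]
  · rintro ⟨h1, h2⟩
    exact ⟨h1, fun ⟨e1, e2⟩ => h2 (by rw [e1, e2]), fun ⟨e1, e2⟩ => h2 (by rw [e1, e2, Sym2.eq_swap])⟩

/-- The graph obtained from `G'` by simultaneously subdividing the `m` edges
`f 0, …, f (m-1)`; subdivision vertex `t : Fin m` is joined to the two endpoints of `f t`. -/
def subGraph {W : Type} (G' : SimpleGraph W) (m : ℕ) (f : Fin m → W × W) :
    SimpleGraph (W ⊕ Fin m) :=
  SimpleGraph.fromRel (fun p q =>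
    (∃ x y, p = inl x ∧ q = inl y ∧ G'.Adj x y ∧ ∀ t, s(x, y) ≠ s((f t).1, (f t).2)) ∨
    (∃ t, p = inr t ∧ (q = inl (f t).1 ∨ q = inl (f t).2)))

lemma subGraph_adj_inl_inl {W : Type} (G' : SimpleGraph W) (m : ℕ) (f : Fin m → W × W)
    (x y : W) : (subGraph G' m f).Adj (inl x) (inl y) ↔
      G'.Adj x y ∧ ∀ t, s(x, y) ≠ s((f t).1, (f t).2) := by
  simp only [subGraph, fromRel_adj]
  constructor
  · rintro ⟨hne, h | h⟩
    · rcases h with ⟨x', y', hx, hy, h1, h2⟩ | ⟨t, ht, -⟩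
      · cases inl.inj hx; cases inl.inj hy; exact ⟨h1, h2⟩
      · exact absurd ht (by simp)
    · rcases h with ⟨x', y', hx, hy, h1, h2⟩ | ⟨t, ht, -⟩
      · cases inl.inj hx; cases inl.inj hy
        exact ⟨h1.symm, fun t => by rw [Sym2.eq_swap]; exact h2 t⟩
      · exact absurd ht (by simp)
  · rintro ⟨h1, h2⟩
    exact ⟨by simpa using h1.ne, Or.inl (Or.inl ⟨x, y, rfl, rfl, h1, h2⟩)⟩

lemma subGraph_adj_inr_inl {W : Type} (G' : SimpleGraph W) (m : ℕ) (f : Fin m → W × W)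
    (t : Fin m) (x : W) : (subGraph G' m f).Adj (inr t) (inl x) ↔
      x = (f t).1 ∨ x = (f t).2 := by
  simp only [subGraph, fromRel_adj]
  constructor
  · rintro ⟨-, h | h⟩
    · rcases h with ⟨x', y', hx, -⟩ | ⟨t', ht, hy⟩
      · exact absurd hx (by simp)
      · cases inr.inj ht
        rcases hy with h | h <;> [left; right] <;> exact inl.inj h
    · rcases h with ⟨x', y', -, hy, -⟩ | ⟨t', ht, -⟩
      · exact absurd hy (by simp)
      · exact absurd ht (by simp)
  · rintro (rfl | rfl) <;> exact ⟨by simp, Or.inl (Or.inr ⟨t, rfl, by simp⟩)⟩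

lemma subGraph_not_adj_inr_inr {W : Type} (G' : SimpleGraph W) (m : ℕ) (f : Fin m → W × W)
    (t t' : Fin m) : ¬ (subGraph G' m f).Adj (inr t) (inr t') := by
  simp only [subGraph, fromRel_adj]
  rintro ⟨-, h | h⟩ <;>
  · rcases h with ⟨x', y', hx, -⟩ | ⟨s, -, hy⟩
    · exact absurd hx (by simp)
    · rcases hy with h | h <;> exact absurd h (by simp)

/-- Tracking lemma: after `n` subdivisions of `p`, the graph `p` minus a set `T` of at most
`n` of its edges appears as an induced subgraph of the result. -/
lemma lemmaA : ∀ (n : ℕ) (p q : GraphB), SubdivSteps n p q →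
    ∃ T : Set (Sym2 p.1), T ⊆ p.2.edgeSet ∧ T.Finite ∧ T.ncard ≤ n ∧
      Nonempty ((p.2.deleteEdges T) ↪g q.2) := by
  intro n
  induction n with
  | zero =>
    rintro p q rfl
    refine ⟨∅, by simp, Set.finite_empty, by simp, ⟨⟨⟨id, fun _ _ h => h⟩, ?_⟩⟩⟩
    intro x y
    simp [deleteEdges_adj]
  | succ n ih =>
    rintro p q ⟨p₁, ⟨u, v, huv, ⟨j⟩⟩, hsteps⟩
    obtain ⟨T₁, hT₁e, hT₁f, hT₁c, ⟨emb₁⟩⟩ := ih p₁ q hsteps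
    set T₁' : Set (Sym2 (Option p.1)) := Sym2.map j '' T₁ with hT₁'
    set T₂ : Set (Sym2 p.1) := (Sym2.map some) ⁻¹' T₁' with hT₂
    have hsomeinj : Function.Injective (Sym2.map (some : p.1 → Option p.1)) :=
      Sym2.map.injective (Option.some_injective _)
    have hjinj : Function.Injective (Sym2.map (j : p₁.1 → Option p.1)) :=
      Sym2.map.injective j.toEquiv.injective
    have hT₁'f : T₁'.Finite := hT₁f.image _
    have hT₂mem : ∀ x y : p.1, s(x, y) ∈ T₂ ↔ s(some x, some y) ∈ T₁' := by
      intro x y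
      rw [hT₂, Set.mem_preimage, Sym2.map_pair_eq]
    have hT₁mem : ∀ A B : Option p.1, s(j.symm A, j.symm B) ∈ T₁ ↔ s(A, B) ∈ T₁' := by
      intro A B
      rw [hT₁', ← hjinj.mem_set_image, Sym2.map_pair_eq]
      simp
    -- membership of T₂ implies edge of p
    have hT₂e : T₂ ⊆ p.2.edgeSet := by
      intro e he
      induction e with
      | _ x y =>
        have h1 : s(some x, some y) ∈ T₁' := (hT₂mem x y).1 he
        rw [← hT₁mem] at h1
        have h2 := hT₁e h1
        rw [mem_edgeSet] at h2 ⊢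
        have h3 : (subdivide p.2 u v).Adj (some x) (some y) := j.symm.map_adj_iff.1 h2
        exact ((subdivide_adj_some_some' p.2 u v x y).1 h3).1
    refine ⟨insert s(u, v) T₂, ?_, (hT₁'f.preimage hsomeinj.injOn).insert _, ?_, ?_⟩
    · rintro e (rfl | he)
      · exact huv
      · exact hT₂e he
    · calc (insert s(u, v) T₂).ncard ≤ T₂.ncard + 1 := Set.ncard_insert_le _ _
        _ ≤ T₁'.ncard + 1 := by
            gcongr
            exact Set.ncard_le_ncard_of_injOn (Sym2.map some) (fun e he => he)
              hsomeinj.injOn hT₁'f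
        _ ≤ n + 1 := by
            gcongr
            rw [hT₁', Set.ncard_image_of_injective _ hjinj]
            exact hT₁c
    · refine ⟨⟨⟨fun x => emb₁ (j.symm (some x)), ?_⟩, ?_⟩⟩
      · intro x y h
        have := emb₁.injective h
        have := j.symm.toEquiv.injective this
        exact Option.some_injective _ this
      · intro x y
        show q.2.Adj (emb₁ (j.symm (some x))) (emb₁ (j.symm (some y))) ↔ _
        rw [emb₁.map_adj_iff, deleteEdges_adj, deleteEdges_adj]
        rw [j.symm.map_adj_iff, subdivide_adj_some_some', hT₁mem, ← hT₂mem]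
        constructor
        · rintro ⟨⟨h1, h2⟩, h3⟩
          exact ⟨h1, by simp [Set.mem_insert_iff, h2, h3]⟩
        · rintro ⟨h1, h2⟩
          simp only [Set.mem_insert_iff, not_or] at h2
          exact ⟨⟨h1, h2.1⟩, h2.2⟩

lemma subGraph_adj_inl_inr {W : Type} (G' : SimpleGraph W) (m : ℕ) (f : Fin m → W × W)
    (t : Fin m) (x : W) : (subGraph G' m f).Adj (inl x) (inr t) ↔
      x = (f t).1 ∨ x = (f t).2 := by
  rw [adj_comm, subGraph_adj_inr_inl]

lemma sym2_some_eq {W : Type*} (x y a b : W) :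
    s((some x : Option W), some y) = s(some a, some b) ↔ s(x, y) = s(a, b) := by
  constructor
  · intro h
    exact Sym2.map.injective (Option.some_injective W) (by simpa [Sym2.map_pair_eq] using h)
  · intro h
    have := congrArg (Sym2.map (some : W → Option W)) h
    simpa [Sym2.map_pair_eq] using this

lemma consIso {W : Type} (G' : SimpleGraph W) (m : ℕ) (f : Fin (m + 1) → W × W) :
    Nonempty ((subGraph (subdivide G' (f 0).1 (f 0).2) m
      (fun t => (some (f t.succ).1, some (f t.succ).2))) ≃g subGraph G' (m + 1) f) := by
  set u := (f 0).1
  set v := (f 0).2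
  refine ⟨⟨⟨Sum.elim (fun o => o.elim (inr 0) (fun w => inl w)) (fun t => inr t.succ),
    Sum.elim (fun w => inl (some w)) (fun t => Fin.cases (inl none) (fun j => inr j) t),
    ?_, ?_⟩, ?_⟩⟩
  · rintro ((_ | w) | t) <;> simp
  · rintro (w | t)
    · rfl
    · induction t using Fin.cases <;> simp
  · rintro ((_ | x) | t) ((_ | y) | t') <;>
      simp only [Equiv.coe_fn_mk, Sum.elim_inl, Sum.elim_inr, Option.elim_none, Option.elim_some]
    · exact iff_of_false (fun h => (subGraph_not_adj_inr_inr _ _ _ _ _) h) (SimpleGraph.irrefl _)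
    · -- inl none, inl (some y) : E = inr 0, inl y
      rw [subGraph_adj_inr_inl, subGraph_adj_inl_inl, subdivide_adj_none]
      have : ∀ t : Fin m, s((none : Option W), some y) ≠
          s(some (f t.succ).1, some (f t.succ).2) := by
        intro t h
        rcases Sym2.eq_iff.1 h with ⟨h1, -⟩ | ⟨h1, -⟩ <;> exact absurd h1 (by simp)
      tauto
    · -- inl none, inr t' : E = inr 0, inr t'.succ
      refine iff_of_false (fun h => (subGraph_not_adj_inr_inr _ _ _ _ _) h) ?_
      rw [subGraph_adj_inl_inr]
      rintro (h | h) <;> exact absurd h (by simp)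
    · -- inl (some x), inl none : E = inl x, inr 0
      rw [subGraph_adj_inl_inr, subGraph_adj_inl_inl]
      rw [show (subdivide G' u v).Adj (some x) none ↔ (subdivide G' u v).Adj none (some x) from
        adj_comm _ _ _, subdivide_adj_none]
      have : ∀ t : Fin m, s(some x, (none : Option W)) ≠
          s(some (f t.succ).1, some (f t.succ).2) := by
        intro t h
        rcases Sym2.eq_iff.1 h with ⟨-, h1⟩ | ⟨-, h1⟩ <;> exact absurd h1 (by simp)
      tauto
    · -- inl (some x), inl (some y) : E = inl x, inl y
      rw [subGraph_adj_inl_inl, subGraph_adj_inl_inl, subdivide_adj_some_some',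
        Fin.forall_fin_succ]
      simp only [ne_eq, sym2_some_eq]
      tauto
    · -- inl (some x), inr t' : E = inl x, inr t'.succ
      rw [subGraph_adj_inl_inr, subGraph_adj_inl_inr]
      simp
    · -- inr t, inl none : E = inr t.succ, inr 0
      refine iff_of_false (fun h => (subGraph_not_adj_inr_inr _ _ _ _ _) h) ?_
      rw [subGraph_adj_inr_inl]
      rintro (h | h) <;> exact absurd h (by simp)
    · -- inr t, inl (some y)
      rw [subGraph_adj_inr_inl, subGraph_adj_inr_inl]
      simp
    · exact iff_of_false (fun h => (subGraph_not_adj_inr_inr _ _ _ _ _) h)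
        (fun h => (subGraph_not_adj_inr_inr _ _ _ _ _) h)

lemma subdivSteps_of_fun : ∀ (m : ℕ) (W : Type) (G' : SimpleGraph W) (f : Fin m → W × W),
    (∀ t, G'.Adj (f t).1 (f t).2) →
    (Function.Injective fun t => s((f t).1, (f t).2)) →
    ∃ q : GraphB, SubdivSteps m ⟨W, G'⟩ q ∧ Nonempty (q.2 ≃g subGraph G' m f) := by
  intro m
  induction m with
  | zero =>
    intro W G' f _ _
    refine ⟨⟨W, G'⟩, rfl, ⟨⟨⟨inl, Sum.elim id Fin.elim0, by intro w; rfl, ?_⟩, ?_⟩⟩⟩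
    · rintro (w | t)
      · rfl
      · exact t.elim0
    · intro x y
      show (subGraph G' 0 f).Adj (inl x) (inl y) ↔ G'.Adj x y
      rw [subGraph_adj_inl_inl]
      constructor
      · rintro ⟨h, -⟩
        exact h
      · intro h
        exact ⟨h, fun t => t.elim0⟩
  | succ m ih =>
    intro W G' f hadj hinj
    set u := (f 0).1 with hu
    set v := (f 0).2 with hv
    set f' : Fin m → Option W × Option W :=
      fun t => (some (f t.succ).1, some (f t.succ).2) with hf'
    have hadj' : ∀ t, (subdivide G' u v).Adj (f' t).1 (f' t).2 := by
      intro t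
      rw [hf']
      rw [subdivide_adj_some_some']
      refine ⟨hadj t.succ, fun he => ?_⟩
      exact Fin.succ_ne_zero t (hinj he)
    have hinj' : Function.Injective fun t => s((f' t).1, (f' t).2) := by
      intro t t' h
      simp only [hf', sym2_some_eq] at h
      exact Fin.succ_injective m (hinj h)
    obtain ⟨q, hsteps, ⟨iso⟩⟩ := ih (Option W) (subdivide G' u v) f' hadj' hinj'
    obtain ⟨iso2⟩ := consIso G' m f
    exact ⟨q, ⟨⟨Option W, subdivide G' u v⟩, ⟨u, v, hadj 0, ⟨Iso.refl (G := subdivide G' u v)⟩⟩, hsteps⟩,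
      ⟨iso.trans iso2⟩⟩

section HStruct

variable {α : Type} [Fintype α] {H : SimpleGraph α} {a b : α}

/-- Short names for the two standing hypotheses. -/
def OneEdge (H : SimpleGraph α) : Prop :=
  ∀ x y x' y' : α, 3 ≤ ndeg H x → 3 ≤ ndeg H y → 3 ≤ ndeg H x' →
      3 ≤ ndeg H y' → H.Adj x y → H.Adj x' y' → s(x, y) = s(x', y')

def Roofed (H : SimpleGraph α) (a b : α) : Prop :=
  ∃ z : α, IsRoofTriangle H a b z ∧ 3 ≤ ndeg H a ∧ 3 ≤ ndeg H b

lemma Roofed.adj (hr : Roofed H a b) : H.Adj a b := by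
  obtain ⟨z, ⟨⟨h1, -, -⟩, -⟩, -⟩ := hr
  exact h1

lemma Roofed.ha3 (hr : Roofed H a b) : 3 ≤ ndeg H a := hr.choose_spec.2.1
lemma Roofed.hb3 (hr : Roofed H a b) : 3 ≤ ndeg H b := hr.choose_spec.2.2
lemma Roofed.ne (hr : Roofed H a b) : a ≠ b := hr.adj.ne

lemma Roofed.aX (hr : Roofed H a b) : a ∈ roofVerts H := by
  obtain ⟨z, hz, -, -⟩ := hr
  exact ⟨b, z, hz⟩

lemma Roofed.bX (hr : Roofed H a b) : b ∈ roofVerts H := by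
  obtain ⟨z, ⟨⟨h1, h2, h3⟩, hc⟩, -, -⟩ := hr
  refine ⟨a, z, ⟨⟨h1.symm, h3, h2⟩, ?_⟩⟩
  rw [show ({b, a, z} : Set α) = {a, b, z} from by
    rw [Set.insert_comm]]
  exact hc

/-- Any page of a roof triangle: adjacent to both `a` and `b`, and of low degree. -/
lemma page_struct (hone : OneEdge H) (hr : Roofed H a b)
    {z : α} (hz : z ∈ roofVerts H) (hza : z ≠ a) (hzb : z ≠ b) :
    H.Adj z a ∧ H.Adj z b ∧ ¬ 3 ≤ ndeg H z := by
  obtain ⟨y, w, ⟨⟨h1, h2, h3⟩, hc⟩⟩ := hz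
  obtain ⟨p, q, hpq, hS⟩ := Set.ncard_eq_two.1 hc
  have hpmem : p ∈ ({z, y, w} : Set α) ∩ {w | 3 ≤ ndeg H w} := hS ▸ Set.mem_insert _ _
  have hqmem : q ∈ ({z, y, w} : Set α) ∩ {w | 3 ≤ ndeg H w} := hS ▸ (by simp)
  obtain ⟨hp1, hp3⟩ := hpmem
  obtain ⟨hq1, hq3⟩ := hqmem
  -- p and q are adjacent (distinct vertices of a triangle)
  have hadjpq : H.Adj p q := by
    rcases hp1 with rfl | rfl | rfl <;> rcases hq1 with rfl | rfl | rfl <;>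
      first
        | exact absurd rfl hpq
        | assumption
        | exact h1.symm
        | exact h2.symm
        | exact h3.symm
  have hkey : s(p, q) = s(a, b) := hone p q a b hp3 hq3 hr.ha3 hr.hb3 hadjpq hr.adj
  have hset : ({p, q} : Set α) = {a, b} := by
    rcases Sym2.eq_iff.1 hkey with ⟨rfl, rfl⟩ | ⟨rfl, rfl⟩
    · rfl
    · exact Set.pair_comm _ _
  have hainS : a ∈ ({z, y, w} : Set α) ∩ {w | 3 ≤ ndeg H w} := by
    rw [hS, hset]; simp
  have hbinS : b ∈ ({z, y, w} : Set α) ∩ {w | 3 ≤ ndeg H w} := by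
    rw [hS, hset]; simp
  have hzlow : ¬ 3 ≤ ndeg H z := by
    intro h3z
    have : z ∈ ({z, y, w} : Set α) ∩ {w | 3 ≤ ndeg H w} := ⟨by simp, h3z⟩
    rw [hS, hset] at this
    rcases this with rfl | rfl
    · rcases hp1 with rfl | rfl | rfl
      · exact hza rfl
      · exact hza rfl
      · exact hza rfl
    · rcases hq1 with h | h | h <;> exact hzb rfl
  have haz : a = y ∨ a = w := by
    rcases hainS.1 with rfl | h | h
    · exact absurd rfl hza.symm
    · exact Or.inl h
    · exact Or.inr h
  have hbz : b = y ∨ b = w := by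
    rcases hbinS.1 with rfl | h | h
    · exact absurd rfl hzb.symm
    · exact Or.inl h
    · exact Or.inr h
  have hab : a ≠ b := hr.ne
  rcases haz with rfl | rfl <;> rcases hbz with rfl | rfl
  · exact absurd rfl hab
  · exact ⟨h1, h3, hzlow⟩
  · exact ⟨h3, h1, hzlow⟩
  · exact absurd rfl hab

/-- No vertex outside `roofVerts H` is adjacent to both `a` and `b`. -/
lemma no_outside_ab (hone : OneEdge H) (hr : Roofed H a b)
    {r : α} (hrX : r ∉ roofVerts H) : ¬ (H.Adj r a ∧ H.Adj r b) := by
  rintro ⟨hra, hrb⟩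
  by_cases h3 : 3 ≤ ndeg H r
  · have hkey : s(r, a) = s(a, b) := hone r a a b h3 hr.ha3 hr.ha3 hr.hb3 hra hr.adj
    rcases Sym2.eq_iff.1 hkey with ⟨rfl, hab⟩ | ⟨rfl, -⟩
    · exact hr.ne hab
    · exact hrX hr.bX
  · refine hrX ⟨a, b, ⟨⟨hra, hr.adj, hrb⟩, ?_⟩⟩
    have : ({r, a, b} : Set α) ∩ {w | 3 ≤ ndeg H w} = {a, b} := by
      ext x
      constructor
      · rintro ⟨(rfl | rfl | rfl), hx⟩
        · exact absurd hx h3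
        · exact Set.mem_insert _ _
        · exact Set.mem_insert_of_mem _ rfl
      · rintro (rfl | rfl)
        · exact ⟨by simp, hr.ha3⟩
        · exact ⟨by simp, hr.hb3⟩
    rw [this]
    exact Set.ncard_pair hr.ne

/-- The neighbors of a page are exactly `a` and `b`. -/
lemma page_nbrs (hone : OneEdge H) (hr : Roofed H a b)
    {z : α} (hz : z ∈ roofVerts H) (hza : z ≠ a) (hzb : z ≠ b)
    {w : α} (hw : H.Adj z w) : w = a ∨ w = b := by
  obtain ⟨h1, h2, h3⟩ := page_struct hone hr hz hza hzb
  have hsub : ({a, b} : Set α) ⊆ H.neighborSet z := by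
    rintro x (rfl | rfl)
    · exact h1
    · exact h2
  have hcard : (H.neighborSet z).ncard ≤ ({a, b} : Set α).ncard := by
    rw [Set.ncard_pair hr.ne]
    have := h3
    unfold ndeg at this
    omega
  have heq : ({a, b} : Set α) = H.neighborSet z :=
    Set.eq_of_subset_of_ncard_le hsub hcard (Set.toFinite _)
  have : w ∈ H.neighborSet z := hw
  rw [← heq] at this
  exact this

end HStruct

section Attach

variable {α V₀ : Type} (H : SimpleGraph α) (a b : α)
  (G₀ : SimpleGraph V₀) (D : Set (V₀ × V₀)) (k : ℕ)

lemma attachRoof_adj_inl_inl (u v : V₀) :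
    (attachRoof H a b G₀ D k).Adj (inl u) (inl v) ↔ G₀.Adj u v := by
  simp only [attachRoof, fromRel_adj]
  constructor
  · rintro ⟨hne, h | h⟩ <;>
      rcases h with ⟨u', v', hu, hv, h1⟩ | ⟨d, i, r, r', hu, -⟩ | ⟨d, i, r, w, hu, -⟩
    · cases inl.inj hu; cases inl.inj hv; exact h1
    · exact absurd hu (by simp)
    · exact absurd hu (by simp)
    · cases inl.inj hu; cases inl.inj hv; exact h1.symm
    · exact absurd hu (by simp)
    · exact absurd hu (by simp)
  · intro h
    exact ⟨by simpa using h.ne, Or.inl (Or.inl ⟨u, v, rfl, rfl, h⟩)⟩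

lemma attachRoof_adj_inr_inr (d d' : ↥D) (i i' : Fin (k + 1))
    (r r' : ↥(roofVerts H)ᶜ) :
    (attachRoof H a b G₀ D k).Adj (inr (d, i, r)) (inr (d', i', r')) ↔
      d = d' ∧ i = i' ∧ H.Adj ↑r ↑r' := by
  simp only [attachRoof, fromRel_adj]
  constructor
  · rintro ⟨hne, h | h⟩ <;>
      rcases h with ⟨u', v', hu, -⟩ | ⟨e, j, s', s'', hu, hv, h1⟩ | ⟨e, j, s', w, hu, hv, -⟩
    · exact absurd hu (by simp)
    · have h2 := inr.inj hu
      have h3 := inr.inj hv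
      simp only [Prod.mk.injEq] at h2 h3
      obtain ⟨rfl, rfl, rfl⟩ := h2
      obtain ⟨rfl, rfl, rfl⟩ := h3
      exact ⟨rfl, rfl, h1⟩
    · exact absurd hv (by simp)
    · exact absurd hu (by simp)
    · have h2 := inr.inj hu
      have h3 := inr.inj hv
      simp only [Prod.mk.injEq] at h2 h3
      exact ⟨h3.1.trans h2.1.symm, h3.2.1.trans h2.2.1.symm, by
        rw [h3.2.2, h2.2.2]; exact h1.symm⟩
    · exact absurd hv (by simp)
  · rintro ⟨rfl, rfl, h⟩
    refine ⟨?_, Or.inl (Or.inr (Or.inl ⟨d, i, r, r', rfl, rfl, h⟩))⟩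
    simp only [ne_eq, inr.injEq, Prod.mk.injEq]
    rintro ⟨-, -, rfl⟩
    exact h.ne rfl

lemma attachRoof_adj_inr_inl (d : ↥D) (i : Fin (k + 1)) (r : ↥(roofVerts H)ᶜ) (w : V₀) :
    (attachRoof H a b G₀ D k).Adj (inr (d, i, r)) (inl w) ↔
      ((w = (↑d : V₀ × V₀).1 ∧ H.Adj ↑r a) ∨ (w = (↑d : V₀ × V₀).2 ∧ H.Adj ↑r b)) := by
  simp only [attachRoof, fromRel_adj]
  constructor
  · rintro ⟨hne, h | h⟩ <;>
      rcases h with ⟨u', v', hu, hv, -⟩ | ⟨e, j, s', s'', hu, hv, -⟩ | ⟨e, j, s', w', hu, hv, h1⟩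
    · exact absurd hu (by simp)
    · exact absurd hv (by simp)
    · cases inl.inj hv
      have h2 := inr.inj hu
      simp only [Prod.mk.injEq] at h2
      obtain ⟨rfl, rfl, rfl⟩ := h2
      exact h1
    · exact absurd hv (by simp)
    · exact absurd hu (by simp)
    · exact absurd hu (by simp)
  · intro h
    exact ⟨by simp, Or.inl (Or.inr (Or.inr ⟨d, i, r, w, rfl, rfl, h⟩))⟩

end Attach

section Main

variable {α V₀ : Type} [Fintype α] [Fintype V₀]

lemma mainFree (H : SimpleGraph α) (a b : α)
    (hone : OneEdge H) (hr : Roofed H a b)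
    (G₀ : SimpleGraph V₀) (k : ℕ) (D : Set (V₀ × V₀))
    (hDadj : ∀ d : ↥D, G₀.Adj (↑d : V₀ × V₀).1 (↑d : V₀ × V₀).2)
    (F : Finset (Sym2 V₀))
    (hfree : HFree (H.induce (roofVerts H)) (G₀.deleteEdges ↑F))
    (m : ℕ)
    (f : Fin m → (V₀ ⊕ (↥D × Fin (k + 1) × ↥(roofVerts H)ᶜ)) ×
      (V₀ ⊕ (↥D × Fin (k + 1) × ↥(roofVerts H)ᶜ)))
    (hf1 : ∀ t, ∃ u v : V₀, (f t).1 = inl u ∧ (f t).2 = inl v ∧ s(u, v) ∈ F)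
    (hf2 : ∀ u v : V₀, s(u, v) ∈ F → ∃ t, s((f t).1, (f t).2) = s(inl u, inl v)) :
    HFree H (subGraph (attachRoof H a b G₀ D k) m f) := by
  classical
  refine ⟨fun φ => ?_⟩
  -- base-base adjacency in Q
  have Qbase : ∀ u v : V₀,
      (subGraph (attachRoof H a b G₀ D k) m f).Adj (inl (inl u)) (inl (inl v)) ↔
        (G₀.deleteEdges ↑F).Adj u v := by
    intro u v
    rw [subGraph_adj_inl_inl, attachRoof_adj_inl_inl, deleteEdges_adj]
    constructor
    · rintro ⟨h1, h2⟩
      refine ⟨h1, fun hmem => ?_⟩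
      obtain ⟨t, ht⟩ := hf2 u v hmem
      exact h2 t ht.symm
    · rintro ⟨h1, h2⟩
      refine ⟨h1, fun t ht => ?_⟩
      obtain ⟨u', v', h3, h4, h5⟩ := hf1 t
      rw [h3, h4] at ht
      rcases Sym2.eq_iff.1 ht with ⟨e1, e2⟩ | ⟨e1, e2⟩
      · cases inl.inj e1; cases inl.inj e2; exact h2 h5
      · cases inl.inj e1; cases inl.inj e2
        rw [Sym2.eq_swap] at h5
        exact h2 h5
  have fnotgadget : ∀ (t : Fin m) (g : ↥D × Fin (k + 1) × ↥(roofVerts H)ᶜ)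
      (z : V₀ ⊕ (↥D × Fin (k + 1) × ↥(roofVerts H)ᶜ)),
      s(inr g, z) ≠ s((f t).1, (f t).2) := by
    intro t g z h
    obtain ⟨u', v', h3, h4, -⟩ := hf1 t
    rw [h3, h4] at h
    rcases Sym2.eq_iff.1 h with ⟨e1, -⟩ | ⟨e1, -⟩ <;> exact absurd e1 (by simp)
  have Qgb : ∀ (d : ↥D) (i : Fin (k + 1)) (r : ↥(roofVerts H)ᶜ) (w : V₀),
      (subGraph (attachRoof H a b G₀ D k) m f).Adj (inl (inr (d, i, r))) (inl (inl w)) ↔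
        ((w = (↑d : V₀ × V₀).1 ∧ H.Adj ↑r a) ∨ (w = (↑d : V₀ × V₀).2 ∧ H.Adj ↑r b)) := by
    intro d i r w
    rw [subGraph_adj_inl_inl, attachRoof_adj_inr_inl]
    constructor
    · rintro ⟨h1, -⟩
      exact h1
    · intro h
      exact ⟨h, fun t => fnotgadget t _ _⟩
  have Qgg : ∀ (d d' : ↥D) (i i' : Fin (k + 1)) (r r' : ↥(roofVerts H)ᶜ),
      (subGraph (attachRoof H a b G₀ D k) m f).Adj
        (inl (inr (d, i, r))) (inl (inr (d', i', r'))) ↔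
        (d = d' ∧ i = i' ∧ H.Adj ↑r ↑r') := by
    intro d d' i i' r r'
    rw [subGraph_adj_inl_inl, attachRoof_adj_inr_inr]
    constructor
    · rintro ⟨h1, -⟩
      exact h1
    · intro h
      exact ⟨h, fun t => fnotgadget t _ _⟩
  have hnotgadget_sub : ∀ (t : Fin m) (g : ↥D × Fin (k + 1) × ↥(roofVerts H)ᶜ),
      ¬ (subGraph (attachRoof H a b G₀ D k) m f).Adj (inl (inr g)) (inr t) := by
    intro t g h
    rw [subGraph_adj_inl_inr] at h
    obtain ⟨u', v', h3, h4, -⟩ := hf1 t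
    rcases h with h | h
    · rw [h3] at h; exact absurd h (by simp)
    · rw [h4] at h; exact absurd h (by simp)
  -- degree bounds
  have hdeg_sub : ∀ t : Fin m,
      ndeg (subGraph (attachRoof H a b G₀ D k) m f) (inr t) ≤ 2 := by
    intro t
    have hsubset : (subGraph (attachRoof H a b G₀ D k) m f).neighborSet (inr t) ⊆
        {inl (f t).1, inl (f t).2} := by
      rintro (x | t') hw
      · rw [mem_neighborSet, subGraph_adj_inr_inl] at hw
        rcases hw with rfl | rfl
        · exact Set.mem_insert _ _
        · exact Set.mem_insert_of_mem _ rfl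
      · exact absurd hw (subGraph_not_adj_inr_inr _ _ _ _ _)
    calc ndeg (subGraph (attachRoof H a b G₀ D k) m f) (inr t)
        ≤ ({inl (f t).1, inl (f t).2} :
            Set ((V₀ ⊕ (↥D × Fin (k + 1) × ↥(roofVerts H)ᶜ)) ⊕ Fin m)).ncard :=
          Set.ncard_le_ncard hsubset (Set.toFinite _)
      _ ≤ 2 := by
          refine (Set.ncard_insert_le _ _).trans ?_
          simp
  have hφdeg : ∀ x : α, ndeg H x ≤ ndeg (subGraph (attachRoof H a b G₀ D k) m f) (φ x) := by
    intro x
    apply Set.ncard_le_ncard_of_injOn φ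
    · intro y hy
      rw [mem_neighborSet] at hy ⊢
      exact φ.map_adj_iff.2 hy
    · exact φ.injective.injOn
  have hdeg_gadget : ∀ (d : ↥D) (i : Fin (k + 1)) (r : ↥(roofVerts H)ᶜ),
      ndeg (subGraph (attachRoof H a b G₀ D k) m f) (inl (inr (d, i, r))) ≤ ndeg H ↑r := by
    intro d i r
    have hd12 : (↑d : V₀ × V₀).1 ≠ (↑d : V₀ × V₀).2 := (hDadj d).ne
    apply Set.ncard_le_ncard_of_injOn
      (Sum.elim (Sum.elim (fun z => if z = (↑d : V₀ × V₀).1 then a else b)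
        (fun g => (↑g.2.2 : α))) (fun _ => a))
    · rintro ((z | ⟨d', i', r'⟩) | t') hw
      · rw [mem_neighborSet] at hw
        rcases (Qgb d i r z).1 hw with ⟨rfl, h⟩ | ⟨rfl, h⟩
        · simpa using h
        · rw [mem_neighborSet]
          simp only [Sum.elim_inl, if_neg hd12.symm]
          exact h
      · rw [mem_neighborSet] at hw
        obtain ⟨-, -, h⟩ := (Qgg d d' i i' r r').1 hw
        exact h
      · exact absurd hw (hnotgadget_sub t' _)
    · rintro ((z1 | ⟨d1, i1, r1⟩) | t1) hw1 ((z2 | ⟨d2, i2, r2⟩) | t2) hw2 heq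
      · -- both base
        simp only [Sum.elim_inl] at heq
        rcases (Qgb d i r z1).1 hw1 with ⟨rfl, -⟩ | ⟨rfl, -⟩ <;>
          rcases (Qgb d i r z2).1 hw2 with ⟨rfl, -⟩ | ⟨rfl, -⟩
        · rfl
        · rw [if_pos rfl, if_neg hd12.symm] at heq
          exact absurd heq hr.ne
        · rw [if_pos rfl, if_neg hd12.symm] at heq
          exact absurd heq.symm hr.ne
        · rfl
      · -- base, gadget
        exfalso
        simp only [Sum.elim_inl, Sum.elim_inr] at heq
        have hmem : (↑r2 : α) ∈ roofVerts H := by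
          rw [← heq]
          split
          · exact hr.aX
          · exact hr.bX
        exact r2.2 hmem
      · exact absurd hw2 (hnotgadget_sub t2 _)
      · -- gadget, base
        exfalso
        simp only [Sum.elim_inl, Sum.elim_inr] at heq
        have hmem : (↑r1 : α) ∈ roofVerts H := by
          rw [heq]
          split
          · exact hr.aX
          · exact hr.bX
        exact r1.2 hmem
      · -- both gadget
        simp only [Sum.elim_inl, Sum.elim_inr] at heq
        obtain ⟨rfl, rfl, -⟩ := (Qgg d d1 i i1 r r1).1 hw1
        obtain ⟨rfl, rfl, -⟩ := (Qgg d d2 i i2 r r2).1 hw2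
        rw [Subtype.coe_injective heq]
      · exact absurd hw2 (hnotgadget_sub t2 _)
      · exact absurd hw1 (hnotgadget_sub t1 _)
      · exact absurd hw1 (hnotgadget_sub t1 _)
      · exact absurd hw1 (hnotgadget_sub t1 _)
  -- shapes of images of high-degree vertices
  have hshape : ∀ x : α, 3 ≤ ndeg H x →
      (∃ u, φ x = inl (inl u)) ∨
      (∃ d i r, φ x = inl (inr (d, i, r)) ∧ 3 ≤ ndeg H (↑r : α)) := by
    intro x hx
    rcases hφx : φ x with ((z | ⟨d, i, r⟩) | t)
    · exact Or.inl ⟨z, rfl⟩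
    · refine Or.inr ⟨d, i, r, rfl, ?_⟩
      have h1 := hφdeg x
      rw [hφx] at h1
      exact le_trans hx (le_trans h1 (hdeg_gadget d i r))
    · exfalso
      have h1 := hφdeg x
      rw [hφx] at h1
      have h2 := hdeg_sub t
      omega
  have hQab : (subGraph (attachRoof H a b G₀ D k) m f).Adj (φ a) (φ b) :=
    φ.map_adj_iff.2 hr.adj
  -- neither a nor b can map to a gadget vertex
  have hgadget_high : ∀ (d : ↥D) (i : Fin (k + 1)) (r : ↥(roofVerts H)ᶜ),
      3 ≤ ndeg H (↑r : α) → ∀ w : V₀,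
      ¬ (subGraph (attachRoof H a b G₀ D k) m f).Adj (inl (inr (d, i, r))) (inl (inl w)) := by
    intro d i r h3r w hadj
    rcases (Qgb d i r w).1 hadj with ⟨-, hadjr⟩ | ⟨-, hadjr⟩
    · have hkey := hone (↑r) a a b h3r hr.ha3 hr.ha3 hr.hb3 hadjr hr.adj
      rcases Sym2.eq_iff.1 hkey with ⟨-, h2⟩ | ⟨h1, -⟩
      · exact hr.ne h2
      · exact r.2 (by rw [h1]; exact hr.bX)
    · have hkey := hone (↑r) b a b h3r hr.hb3 hr.ha3 hr.hb3 hadjr hr.adj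
      rcases Sym2.eq_iff.1 hkey with ⟨h1, -⟩ | ⟨-, h2⟩
      · exact r.2 (by rw [h1]; exact hr.aX)
      · exact (hr.adj.ne) h2.symm
  obtain ⟨ua, hua⟩ : ∃ u, φ a = inl (inl u) := by
    rcases hshape a hr.ha3 with h | ⟨d, i, r, hfa, h3r⟩
    · exact h
    · exfalso
      rcases hshape b hr.hb3 with ⟨ub, hub⟩ | ⟨d', i', r', hfb, h3r'⟩
      · rw [hfa, hub] at hQab
        exact hgadget_high d i r h3r ub hQab
      · rw [hfa, hfb] at hQab
        obtain ⟨-, -, hadj⟩ := (Qgg d d' i i' r r').1 hQab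
        have hkey := hone (↑r) (↑r') a b h3r h3r' hr.ha3 hr.hb3 hadj hr.adj
        rcases Sym2.eq_iff.1 hkey with ⟨h1, -⟩ | ⟨h1, -⟩
        · exact r.2 (by rw [h1]; exact hr.aX)
        · exact r.2 (by rw [h1]; exact hr.bX)
  obtain ⟨ub, hub⟩ : ∃ u, φ b = inl (inl u) := by
    rcases hshape b hr.hb3 with h | ⟨d, i, r, hfb, h3r⟩
    · exact h
    · exfalso
      rw [hfb, hua] at hQab
      exact hgadget_high d i r h3r ua hQab.symm
  have hadjF : (G₀.deleteEdges ↑F).Adj ua ub := by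
    rw [← Qbase]
    rw [hua, hub] at hQab
    exact hQab
  -- every vertex of X maps to a base vertex
  have hpage : ∀ x : α, x ∈ roofVerts H → ∃ w, φ x = inl (inl w) := by
    intro x hxX
    by_cases hxa : x = a
    · exact ⟨ua, by rw [hxa]; exact hua⟩
    by_cases hxb : x = b
    · exact ⟨ub, by rw [hxb]; exact hub⟩
    obtain ⟨hx_a, hx_b, -⟩ := page_struct hone hr hxX hxa hxb
    have hQxa : (subGraph (attachRoof H a b G₀ D k) m f).Adj (φ x) (φ a) :=
      φ.map_adj_iff.2 hx_a
    have hQxb : (subGraph (attachRoof H a b G₀ D k) m f).Adj (φ x) (φ b) :=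
      φ.map_adj_iff.2 hx_b
    rcases hφx : φ x with ((z | ⟨d, i, r⟩) | t)
    · exact ⟨z, rfl⟩
    · exfalso
      rw [hφx, hua] at hQxa
      rw [hφx, hub] at hQxb
      rcases (Qgb d i r ua).1 hQxa with ⟨h1, hadj1⟩ | ⟨h1, hadj1⟩ <;>
        rcases (Qgb d i r ub).1 hQxb with ⟨h2, hadj2⟩ | ⟨h2, hadj2⟩
      · exact hadjF.ne (h1.trans h2.symm)
      · exact no_outside_ab hone hr r.2 ⟨hadj1, hadj2⟩
      · exact no_outside_ab hone hr r.2 ⟨hadj2, hadj1⟩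
      · exact hadjF.ne (h1.trans h2.symm)
    · exfalso
      rw [hφx, hua] at hQxa
      rw [hφx, hub] at hQxb
      rw [subGraph_adj_inr_inl] at hQxa hQxb
      obtain ⟨u', v', h3, h4, h5⟩ := hf1 t
      rw [h3, h4] at hQxa hQxb
      have hne : ua ≠ ub := hadjF.ne
      have hmem : s(ua, ub) ∈ F := by
        rcases hQxa with h | h <;> rcases hQxb with h' | h'
        · cases inl.inj h; cases inl.inj h'; exact absurd rfl hne
        · cases inl.inj h; cases inl.inj h'; exact h5
        · cases inl.inj h; cases inl.inj h'
          rw [Sym2.eq_swap]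
          exact h5
        · cases inl.inj h; cases inl.inj h'; exact absurd rfl hne
      exact (deleteEdges_adj.1 hadjF).2 hmem
  -- build the forbidden embedding of H' into G₀ − F
  have hchoice : ∀ x : ↥(roofVerts H), ∃ w, φ ↑x = inl (inl w) :=
    fun x => hpage ↑x x.2
  have hψspec : ∀ x : ↥(roofVerts H), φ ↑x = inl (inl ((hchoice x).choose)) :=
    fun x => (hchoice x).choose_spec
  refine hfree.false ⟨⟨fun x => (hchoice x).choose, ?_⟩, ?_⟩
  · intro x y h
    apply Subtype.ext
    apply φ.injective
    rw [hψspec x, hψspec y]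
    exact congrArg (fun w => (inl (inl w) :
      (V₀ ⊕ (↥D × Fin (k + 1) × ↥(roofVerts H)ᶜ)) ⊕ Fin m)) h
  · intro x y
    show (G₀.deleteEdges ↑F).Adj ((hchoice x).choose) ((hchoice y).choose) ↔
      (H.induce (roofVerts H)).Adj x y
    rw [← Qbase, ← hψspec x, ← hψspec y, φ.map_adj_iff]
    exact Iff.rfl

lemma adj_induce_iff {H : SimpleGraph α} {a b : α}
    (hone : OneEdge H) (hr : Roofed H a b) (x y : ↥(roofVerts H)) :
    (H.induce (roofVerts H)).Adj x y ↔
      x ≠ y ∧ ((↑x : α) = a ∨ (↑x : α) = b ∨ (↑y : α) = a ∨ (↑y : α) = b) := by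
  constructor
  · intro h
    have hadj : H.Adj ↑x ↑y := h
    refine ⟨fun he => hadj.ne (congrArg _ he), ?_⟩
    by_contra hc
    push_neg at hc
    obtain ⟨h1, h2, h3, h4⟩ := hc
    rcases page_nbrs hone hr x.2 h1 h2 hadj with h5 | h5
    · exact h3 h5
    · exact h4 h5
  · rintro ⟨hne, hor⟩
    have hnexy : (↑x : α) ≠ ↑y := fun he => hne (Subtype.ext he)
    show H.Adj ↑x ↑y
    rcases hor with h | h | h | h
    · by_cases hyb : (↑y : α) = b
      · rw [h, hyb]; exact hr.adj
      · obtain ⟨hya, -, -⟩ :=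
          page_struct hone hr y.2 (fun hy => hnexy (h.trans hy.symm)) hyb
        rw [h]; exact hya.symm
    · by_cases hya : (↑y : α) = a
      · rw [h, hya]; exact hr.adj.symm
      · obtain ⟨-, hyb, -⟩ :=
          page_struct hone hr y.2 hya (fun hy => hnexy (h.trans hy.symm))
        rw [h]; exact hyb.symm
    · by_cases hxb : (↑x : α) = b
      · rw [h, hxb]; exact hr.adj.symm
      · obtain ⟨hxa, -, -⟩ :=
          page_struct hone hr x.2 (fun hx => hnexy (hx.trans h.symm)) hxb
        rw [h]; exact hxa
    · by_cases hxa : (↑x : α) = a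
      · rw [h, hxa]; exact hr.adj
      · obtain ⟨-, hxb, -⟩ :=
          page_struct hone hr x.2 hxa (fun hx => hnexy (hx.trans h.symm))
        rw [h]; exact hxb

set_option maxHeartbeats 1000000 in
lemma swap_embedding {H : SimpleGraph α} {a b : α}
    (hone : OneEdge H) (hr : Roofed H a b) {β : Type*} {K : SimpleGraph β}
    (e : (H.induce (roofVerts H)) ↪g K) :
    ∃ e' : (H.induce (roofVerts H)) ↪g K,
      e' ⟨a, hr.aX⟩ = e ⟨b, hr.bX⟩ ∧ e' ⟨b, hr.bX⟩ = e ⟨a, hr.aX⟩ := by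
  classical
  have hσd : ∀ z : ↥(roofVerts H), ∃ w : ↥(roofVerts H),
      ((↑z : α) = a → w = ⟨b, hr.bX⟩) ∧ ((↑z : α) = b → w = ⟨a, hr.aX⟩) ∧
      ((↑z : α) ≠ a → (↑z : α) ≠ b → w = z) ∧
      (((↑w : α) = a ∨ (↑w : α) = b) ↔ ((↑z : α) = a ∨ (↑z : α) = b)) := by
    intro z
    by_cases h1 : (↑z : α) = a
    · refine ⟨⟨b, hr.bX⟩, fun _ => rfl, fun h2 => absurd (h1.symm.trans h2) hr.ne, ?_, ?_⟩
      · intro h; exact absurd h1 h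
      · simp only [Subtype.coe_mk]
        tauto
    · by_cases h2 : (↑z : α) = b
      · refine ⟨⟨a, hr.aX⟩, fun h1' => absurd h1' h1, fun _ => rfl, ?_, ?_⟩
        · intro _ h; exact absurd h2 h
        · simp only [Subtype.coe_mk]
          tauto
      · exact ⟨z, fun h => absurd h h1, fun h => absurd h h2, fun _ _ => rfl, Iff.rfl⟩
  choose σ hσ1 hσ2 hσ3 hσ4 using hσd
  have hσinvol : ∀ z, σ (σ z) = z := by
    intro z
    by_cases h1 : (↑z : α) = a
    · have h5 := hσ2 (σ z) (by rw [hσ1 z h1])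
      rw [h5]
      exact Subtype.ext h1.symm
    · by_cases h2 : (↑z : α) = b
      · have h5 := hσ1 (σ z) (by rw [hσ2 z h2])
        rw [h5]
        exact Subtype.ext h2.symm
      · rw [hσ3 z h1 h2, hσ3 z h1 h2]
  have hσinj : Function.Injective σ := by
    intro z w h
    rw [← hσinvol z, ← hσinvol w, h]
  have hmap : ∀ x y : ↥(roofVerts H),
      (H.induce (roofVerts H)).Adj (σ x) (σ y) ↔ (H.induce (roofVerts H)).Adj x y := by
    intro x y
    rw [adj_induce_iff hone hr, adj_induce_iff hone hr]
    have h1 : (σ x ≠ σ y) ↔ x ≠ y := by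
      constructor
      · intro h he
        exact h (he ▸ rfl)
      · intro h he
        exact h (hσinj he)
    have h2 := hσ4 x
    have h3 := hσ4 y
    tauto
  refine ⟨e.comp ⟨⟨σ, hσinj⟩, fun {x y} => hmap x y⟩, ?_, ?_⟩
  · show e (σ ⟨a, hr.aX⟩) = e ⟨b, hr.bX⟩
    rw [hσ1 _ rfl]
  · show e (σ ⟨b, hr.bX⟩) = e ⟨a, hr.aX⟩
    rw [hσ2 _ rfl]

lemma buildEmbed (H : SimpleGraph α) (a b : α) (hone : OneEdge H) (hr : Roofed H a b)
    (G₀ : SimpleGraph V₀) (k : ℕ) (D : Set (V₀ × V₀))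
    (T : Set (Sym2 (V₀ ⊕ (↥D × Fin (k + 1) × ↥(roofVerts H)ᶜ))))
    (F : Finset (Sym2 V₀))
    (hTF : ∀ u v : V₀, s((inl u : V₀ ⊕ (↥D × Fin (k + 1) × ↥(roofVerts H)ᶜ)), inl v) ∈ T
      ↔ s(u, v) ∈ F)
    (e : (H.induce (roofVerts H)) ↪g (G₀.deleteEdges ↑F))
    (d : ↥D) (i : Fin (k + 1))
    (hd12 : (↑d : V₀ × V₀).1 ≠ (↑d : V₀ × V₀).2)
    (hd1 : e ⟨a, hr.aX⟩ = (↑d : V₀ × V₀).1) (hd2 : e ⟨b, hr.bX⟩ = (↑d : V₀ × V₀).2)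
    (hi : ∀ s ∈ T, ∀ (r : ↥(roofVerts H)ᶜ),
      (inr (d, i, r) : V₀ ⊕ (↥D × Fin (k + 1) × ↥(roofVerts H)ᶜ)) ∉ s) :
    Nonempty (H ↪g ((attachRoof H a b G₀ D k).deleteEdges T)) := by
  classical
  have keyXX : ∀ (x : α) (hx : x ∈ roofVerts H) (y : α) (hy : y ∈ roofVerts H),
      ((attachRoof H a b G₀ D k).deleteEdges T).Adj
        (inl (e ⟨x, hx⟩)) (inl (e ⟨y, hy⟩)) ↔ H.Adj x y := by
    intro x hx y hy
    rw [deleteEdges_adj, attachRoof_adj_inl_inl]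
    constructor
    · rintro ⟨h1, h2⟩
      have hGF : (G₀.deleteEdges ↑F).Adj (e ⟨x, hx⟩) (e ⟨y, hy⟩) := by
        rw [deleteEdges_adj]
        exact ⟨h1, fun hmem => h2 ((hTF _ _).2 (Finset.mem_coe.1 hmem))⟩
      exact e.map_adj_iff.1 hGF
    · intro h
      have hGF : (G₀.deleteEdges ↑F).Adj (e ⟨x, hx⟩) (e ⟨y, hy⟩) := e.map_adj_iff.2 h
      rw [deleteEdges_adj] at hGF
      exact ⟨hGF.1, fun hmem => hGF.2 (Finset.mem_coe.2 ((hTF _ _).1 hmem))⟩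
  have keyOO : ∀ (x : α) (hx : x ∉ roofVerts H) (y : α) (hy : y ∉ roofVerts H),
      ((attachRoof H a b G₀ D k).deleteEdges T).Adj
        (inr (d, i, ⟨x, hx⟩)) (inr (d, i, ⟨y, hy⟩)) ↔ H.Adj x y := by
    intro x hx y hy
    rw [deleteEdges_adj, attachRoof_adj_inr_inr]
    constructor
    · rintro ⟨⟨-, -, h⟩, -⟩
      exact h
    · intro h
      exact ⟨⟨rfl, rfl, h⟩, fun hmem =>
        hi _ hmem ⟨x, hx⟩ (Sym2.mem_iff.2 (Or.inl rfl))⟩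
  have keyXO : ∀ (x : α) (hx : x ∈ roofVerts H) (y : α) (hy : y ∉ roofVerts H),
      ((attachRoof H a b G₀ D k).deleteEdges T).Adj
        (inl (e ⟨x, hx⟩)) (inr (d, i, ⟨y, hy⟩)) ↔ H.Adj x y := by
    intro x hx y hy
    rw [deleteEdges_adj, adj_comm, attachRoof_adj_inr_inl]
    have hTnot : s((inl (e ⟨x, hx⟩) : V₀ ⊕ (↥D × Fin (k + 1) × ↥(roofVerts H)ᶜ)),
        inr (d, i, ⟨y, hy⟩)) ∉ T := fun hmem =>
      hi _ hmem ⟨y, hy⟩ (Sym2.mem_iff.2 (Or.inr rfl))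
    rw [and_iff_left hTnot]
    by_cases hxa : x = a
    · subst hxa
      have he1 : e ⟨x, hx⟩ = (↑d : V₀ × V₀).1 := hd1
      constructor
      · rintro (⟨-, h⟩ | ⟨h2, -⟩)
        · exact h.symm
        · exact absurd (he1.symm.trans h2) hd12
      · intro h
        exact Or.inl ⟨he1, h.symm⟩
    by_cases hxb : x = b
    · subst hxb
      have he2 : e ⟨x, hx⟩ = (↑d : V₀ × V₀).2 := hd2
      constructor
      · rintro (⟨h2, -⟩ | ⟨-, h⟩)
        · exact absurd (he2.symm.trans h2) hd12.symm
        · exact h.symm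
      · intro h
        exact Or.inr ⟨he2, h.symm⟩
    · constructor
      · rintro (⟨h2, -⟩ | ⟨h2, -⟩)
        · exfalso
          apply hxa
          have := e.injective (h2.trans hd1.symm)
          exact congrArg Subtype.val this
        · exfalso
          apply hxb
          have := e.injective (h2.trans hd2.symm)
          exact congrArg Subtype.val this
      · intro h
        rcases page_nbrs hone hr hx hxa hxb h with rfl | rfl
        · exact absurd hr.aX hy
        · exact absurd hr.bX hy
  refine ⟨⟨⟨fun x => if hx : x ∈ roofVerts H then inl (e ⟨x, hx⟩)
      else inr (d, i, ⟨x, hx⟩), ?_⟩, ?_⟩⟩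
  · intro x y h
    by_cases hx : x ∈ roofVerts H <;> by_cases hy : y ∈ roofVerts H
    · simp only [dif_pos hx, dif_pos hy] at h
      exact congrArg Subtype.val (e.injective (inl.inj h))
    · simp only [dif_pos hx, dif_neg hy] at h
      exact absurd h (by simp)
    · simp only [dif_neg hx, dif_pos hy] at h
      exact absurd h (by simp)
    · simp only [dif_neg hx, dif_neg hy] at h
      have h2 := inr.inj h
      simp only [Prod.mk.injEq] at h2
      exact congrArg Subtype.val h2.2.2
  · intro x y
    show ((attachRoof H a b G₀ D k).deleteEdges T).Adj
      (if hx : x ∈ roofVerts H then inl (e ⟨x, hx⟩) else inr (d, i, ⟨x, hx⟩))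
      (if hy : y ∈ roofVerts H then inl (e ⟨y, hy⟩) else inr (d, i, ⟨y, hy⟩)) ↔ H.Adj x y
    by_cases hx : x ∈ roofVerts H <;> by_cases hy : y ∈ roofVerts H
    · simp only [dif_pos hx, dif_pos hy]
      exact keyXX x hx y hy
    · simp only [dif_pos hx, dif_neg hy]
      exact keyXO x hx y hy
    · simp only [dif_neg hx, dif_pos hy]
      rw [adj_comm, keyXO y hy x hx]
      constructor <;> exact fun h => h.symm
    · simp only [dif_neg hx, dif_neg hy]
      exact keyOO x hx y hy

end Main

end RoofAux

open RoofAux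

/-- The roof-triangle reduction: with `H'` the book graph induced by the roof triangles of
`H`, and `G` built from `G₀` as in `attachRoof`, `G₀` has a set of at most `k` edges whose
deletion makes it `H'`-free if and only if some graph obtained from `G` by at most `k` edge
subdivisions is `H`-free. -/
theorem roof_triangle_reduction
    {α V₀ : Type} [Fintype α] [Fintype V₀]
    (H : SimpleGraph α) (a b : α)
    (honeEdge : ∀ x y x' y' : α, 3 ≤ ndeg H x → 3 ≤ ndeg H y → 3 ≤ ndeg H x' →
      3 ≤ ndeg H y' → H.Adj x y → H.Adj x' y' → s(x, y) = s(x', y'))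
    (hroof : ∃ z : α, IsRoofTriangle H a b z ∧ 3 ≤ ndeg H a ∧ 3 ≤ ndeg H b)
    (G₀ : SimpleGraph V₀) (k : ℕ)
    (D : Set (V₀ × V₀))
    (hD : ∀ u v : V₀, G₀.Adj u v ↔ ((u, v) ∈ D ∨ (v, u) ∈ D))
    (hD' : ∀ u v : V₀, (u, v) ∈ D → (v, u) ∉ D) :
    (∃ F : Finset (Sym2 V₀), ↑F ⊆ G₀.edgeSet ∧ F.card ≤ k ∧
        HFree (H.induce (roofVerts H)) (G₀.deleteEdges ↑F)) ↔
    (∃ n ≤ k, ∃ q : GraphB,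
        SubdivSteps n ⟨V₀ ⊕ (↥D × Fin (k + 1) × ↥(roofVerts H)ᶜ), attachRoof H a b G₀ D k⟩ q ∧
        HFree H q.2) := by
  classical
  have hone : OneEdge H := honeEdge
  have hr : Roofed H a b := hroof
  have hDadj : ∀ d : ↥D, G₀.Adj (↑d : V₀ × V₀).1 (↑d : V₀ × V₀).2 := by
    intro d
    refine (hD _ _).2 (Or.inl ?_)
    rw [Prod.mk.eta]
    exact d.2
  constructor
  · rintro ⟨F, hFe, hFc, hfree⟩
    have hpick : ∀ t : Fin F.card, ∃ u v : V₀, s(u, v) = ↑(F.equivFin.symm t) := by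
      intro t
      obtain ⟨⟨u, v⟩, hp⟩ := Quot.exists_rep (↑(F.equivFin.symm t) : Sym2 V₀)
      exact ⟨u, v, hp⟩
    choose u v huv using hpick
    have hFedge : ∀ t, s(u t, v t) ∈ F := by
      intro t
      rw [huv t]
      exact (F.equivFin.symm t).2
    have hadj : ∀ t : Fin F.card,
        (attachRoof H a b G₀ D k).Adj
          ((fun t => ((Sum.inl (u t) : V₀ ⊕ (↥D × Fin (k + 1) × ↥(roofVerts H)ᶜ)),
            (Sum.inl (v t) : V₀ ⊕ (↥D × Fin (k + 1) × ↥(roofVerts H)ᶜ)))) t).1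
          ((fun t => ((Sum.inl (u t) : V₀ ⊕ (↥D × Fin (k + 1) × ↥(roofVerts H)ᶜ)),
            (Sum.inl (v t) : V₀ ⊕ (↥D × Fin (k + 1) × ↥(roofVerts H)ᶜ)))) t).2 := by
      intro t
      rw [attachRoof_adj_inl_inl]
      exact (mem_edgeSet _).1 (hFe (Finset.mem_coe.2 (hFedge t)))
    have hinj : Function.Injective (fun t : Fin F.card =>
        s(((fun t => ((Sum.inl (u t) : V₀ ⊕ (↥D × Fin (k + 1) × ↥(roofVerts H)ᶜ)),
            (Sum.inl (v t) : V₀ ⊕ (↥D × Fin (k + 1) × ↥(roofVerts H)ᶜ)))) t).1,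
          ((fun t => ((Sum.inl (u t) : V₀ ⊕ (↥D × Fin (k + 1) × ↥(roofVerts H)ᶜ)),
            (Sum.inl (v t) : V₀ ⊕ (↥D × Fin (k + 1) × ↥(roofVerts H)ᶜ)))) t).2)) := by
      intro t t' h
      simp only at h
      have h2 : Sym2.map (Sum.inl : V₀ → V₀ ⊕ (↥D × Fin (k + 1) × ↥(roofVerts H)ᶜ))
          s(u t, v t) = Sym2.map Sum.inl s(u t', v t') := by
        simpa [Sym2.map_pair_eq] using h
      have h3 := Sym2.map.injective Sum.inl_injective h2
      rw [huv t, huv t'] at h3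
      exact F.equivFin.symm.injective (Subtype.ext h3)
    obtain ⟨q, hsteps, ⟨iso⟩⟩ := subdivSteps_of_fun F.card _ (attachRoof H a b G₀ D k)
      (fun t => ((Sum.inl (u t) : V₀ ⊕ (↥D × Fin (k + 1) × ↥(roofVerts H)ᶜ)),
        (Sum.inl (v t) : V₀ ⊕ (↥D × Fin (k + 1) × ↥(roofVerts H)ᶜ)))) hadj hinj
    refine ⟨F.card, hFc, q, hsteps, ⟨fun emb => ?_⟩⟩
    have hf1 : ∀ t : Fin F.card, ∃ u' v' : V₀,
        ((fun t => ((Sum.inl (u t) : V₀ ⊕ (↥D × Fin (k + 1) × ↥(roofVerts H)ᶜ)),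
          (Sum.inl (v t) : V₀ ⊕ (↥D × Fin (k + 1) × ↥(roofVerts H)ᶜ)))) t).1 = Sum.inl u' ∧
        ((fun t => ((Sum.inl (u t) : V₀ ⊕ (↥D × Fin (k + 1) × ↥(roofVerts H)ᶜ)),
          (Sum.inl (v t) : V₀ ⊕ (↥D × Fin (k + 1) × ↥(roofVerts H)ᶜ)))) t).2 = Sum.inl v' ∧
        s(u', v') ∈ F := fun t => ⟨u t, v t, rfl, rfl, hFedge t⟩
    have hf2 : ∀ u' v' : V₀, s(u', v') ∈ F → ∃ t : Fin F.card,
        s(((fun t => ((Sum.inl (u t) : V₀ ⊕ (↥D × Fin (k + 1) × ↥(roofVerts H)ᶜ)),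
          (Sum.inl (v t) : V₀ ⊕ (↥D × Fin (k + 1) × ↥(roofVerts H)ᶜ)))) t).1,
          ((fun t => ((Sum.inl (u t) : V₀ ⊕ (↥D × Fin (k + 1) × ↥(roofVerts H)ᶜ)),
          (Sum.inl (v t) : V₀ ⊕ (↥D × Fin (k + 1) × ↥(roofVerts H)ᶜ)))) t).2) =
          s(Sum.inl u', Sum.inl v') := by
      intro u' v' hm
      refine ⟨F.equivFin ⟨s(u', v'), hm⟩, ?_⟩
      have h5 : s(u (F.equivFin ⟨s(u', v'), hm⟩), v (F.equivFin ⟨s(u', v'), hm⟩)) =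
          s(u', v') := by
        rw [huv]
        simp
      simp only
      calc s((Sum.inl (u (F.equivFin ⟨s(u', v'), hm⟩)) :
            V₀ ⊕ (↥D × Fin (k + 1) × ↥(roofVerts H)ᶜ)),
            Sum.inl (v (F.equivFin ⟨s(u', v'), hm⟩)))
          = Sym2.map Sum.inl s(u (F.equivFin ⟨s(u', v'), hm⟩),
              v (F.equivFin ⟨s(u', v'), hm⟩)) := by rw [Sym2.map_pair_eq]
        _ = Sym2.map Sum.inl s(u', v') := by rw [h5]
        _ = s(Sum.inl u', Sum.inl v') := by rw [Sym2.map_pair_eq]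
    exact (mainFree H a b hone hr G₀ k D hDadj F hfree F.card _ hf1 hf2).false
      (iso.toEmbedding.comp emb)
  · rintro ⟨n, hn, q, hsteps, hqfree⟩
    obtain ⟨T, hTe, hTf, hTc, ⟨embT⟩⟩ :=
      lemmaA n ⟨V₀ ⊕ (↥D × Fin (k + 1) × ↥(roofVerts H)ᶜ), attachRoof H a b G₀ D k⟩ q hsteps
    have hmapinj : Function.Injective
        (Sym2.map (Sum.inl : V₀ → V₀ ⊕ (↥D × Fin (k + 1) × ↥(roofVerts H)ᶜ))) :=
      Sym2.map.injective Sum.inl_injective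
    have hFfin : (Sym2.map (Sum.inl : V₀ → V₀ ⊕ (↥D × Fin (k + 1) × ↥(roofVerts H)ᶜ))
        ⁻¹' T).Finite := hTf.preimage hmapinj.injOn
    have hTFiff : ∀ u' v' : V₀,
        s((Sum.inl u' : V₀ ⊕ (↥D × Fin (k + 1) × ↥(roofVerts H)ᶜ)), Sum.inl v') ∈ T ↔
        s(u', v') ∈ hFfin.toFinset := by
      intro u' v'
      rw [Set.Finite.mem_toFinset, Set.mem_preimage, Sym2.map_pair_eq]
    refine ⟨hFfin.toFinset, ?_, ?_, ?_⟩
    · intro e he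
      rw [Finset.mem_coe, Set.Finite.mem_toFinset] at he
      induction e with
      | _ x y =>
        have h1 : (attachRoof H a b G₀ D k).Adj (Sum.inl x) (Sum.inl y) := by
          have h2 := hTe he
          rw [Sym2.map_pair_eq] at h2
          exact (mem_edgeSet _).1 h2
        rw [attachRoof_adj_inl_inl] at h1
        exact (mem_edgeSet _).2 h1
    · have h1 : (Sym2.map (Sum.inl : V₀ → V₀ ⊕ (↥D × Fin (k + 1) × ↥(roofVerts H)ᶜ))
          ⁻¹' T).ncard ≤ T.ncard :=
        Set.ncard_le_ncard_of_injOn _ (fun e he => he) hmapinj.injOn hTf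
      have h2 : hFfin.toFinset.card =
          (Sym2.map (Sum.inl : V₀ → V₀ ⊕ (↥D × Fin (k + 1) × ↥(roofVerts H)ᶜ))
            ⁻¹' T).ncard := by
        rw [← Set.ncard_coe_finset, Set.Finite.coe_toFinset]
      omega
    · refine ⟨fun e => ?_⟩
      have hadjAB : (G₀.deleteEdges ↑hFfin.toFinset).Adj (e ⟨a, hr.aX⟩) (e ⟨b, hr.bX⟩) :=
        e.map_adj_iff.2 hr.adj
      have hG0 : G₀.Adj (e ⟨a, hr.aX⟩) (e ⟨b, hr.bX⟩) := (deleteEdges_adj.1 hadjAB).1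
      obtain ⟨d, e₂, hd1, hd2⟩ : ∃ (d : ↥D)
          (e₂ : (H.induce (roofVerts H)) ↪g (G₀.deleteEdges ↑hFfin.toFinset)),
          e₂ ⟨a, hr.aX⟩ = (↑d : V₀ × V₀).1 ∧ e₂ ⟨b, hr.bX⟩ = (↑d : V₀ × V₀).2 := by
        rcases (hD _ _).1 hG0 with hmem | hmem
        · exact ⟨⟨(e ⟨a, hr.aX⟩, e ⟨b, hr.bX⟩), hmem⟩, e, rfl, rfl⟩
        · obtain ⟨e', h1, h2⟩ := swap_embedding hone hr e
          exact ⟨⟨(e ⟨b, hr.bX⟩, e ⟨a, hr.aX⟩), hmem⟩, e', h1, h2⟩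
      have hgood : ∃ i : Fin (k + 1), ∀ s ∈ T, ∀ r : ↥(roofVerts H)ᶜ,
          (Sum.inr (d, i, r) : V₀ ⊕ (↥D × Fin (k + 1) × ↥(roofVerts H)ᶜ)) ∉ s := by
        by_contra hc
        push_neg at hc
        choose g hgT r hgmem using hc
        have hginj : Function.Injective g := by
          intro i i' hgeq
          by_contra hne
          have h1 := hgmem i
          have h2 := hgmem i'
          rw [hgeq] at h1
          have hedge : g i' ∈ (attachRoof H a b G₀ D k).edgeSet := hTe (hgT i')
          obtain ⟨⟨x, y⟩, hxy⟩ := Quot.exists_rep (g i')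
          rw [← hxy] at h1 h2 hedge
          rw [Sym2.mem_iff] at h1 h2
          have hadjxy : (attachRoof H a b G₀ D k).Adj x y := (mem_edgeSet _).1 hedge
          rcases h1 with rfl | rfl <;> rcases h2 with h2 | h2
          · have := Sum.inr.inj h2.symm
            simp only [Prod.mk.injEq] at this
            exact hne this.2.1
          · rw [← h2] at hadjxy
            rw [attachRoof_adj_inr_inr] at hadjxy
            exact hne hadjxy.2.1
          · rw [← h2] at hadjxy
            rw [attachRoof_adj_inr_inr] at hadjxy
            exact hne hadjxy.2.1.symm
          · have := Sum.inr.inj h2.symm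
            simp only [Prod.mk.injEq] at this
            exact hne this.2.1
        exfalso
        have hfinT : Finite ↥T := hTf.to_subtype
        have h5 : Nat.card (Fin (k + 1)) ≤ Nat.card ↥T :=
          Nat.card_le_card_of_injective (fun i => (⟨g i, hgT i⟩ : ↥T))
            (fun i i' h => hginj (congrArg Subtype.val h))
        rw [Nat.card_coe_set_eq, Nat.card_eq_fintype_card, Fintype.card_fin] at h5
        omega
      obtain ⟨i, hi⟩ := hgood
      obtain ⟨ψ⟩ := buildEmbed H a b hone hr G₀ k D T hFfin.toFinset hTFiff e₂ d i
        (hDadj d).ne hd1 hd2 hi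
      exact hqfree.false (embT.comp ψ)
end
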